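/- arXiv:1511.08191 — 5 statements merged into one kernel-verified Lean document; each statement's English description precedes it below -/
import Mathlib

section
/- For a finite Borel regular measure μ on a compact metric space X and any point x ∈ X, the lower local dimension of μ at x equals the infimum of all s ≥ 0 such that the s-potential φ_s(x) = ∫ d(x,y)^{-s} dμ(y) is infinite, which also equals the supremum of all s ≥ 0 such that φ_s(x) is finite. -/
open MeasureTheory Filter Metric Set Topology
open scoped ENNReal

/-- The lower local dimension of a measure at a point. -/
noncomputable def lowerLocalDim {X : Type*} [MetricSpace X] [MeasurableSpace X]
    (μ : Measure X) (x : X) : ℝ :=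
  liminf (fun r : ℝ => Real.log (μ (closedBall x r)).toReal / Real.log r) (𝓝[>] 0)

/-- The `s`-potential of `μ` at `x`. -/
noncomputable def potential {X : Type*} [MetricSpace X] [MeasurableSpace X]
    (μ : Measure X) (s : ℝ) (x : X) : ℝ≥0∞ :=
  ∫⁻ y, edist x y ^ (-s) ∂μ

lemma rpow_neg_anti {a b : ℝ≥0∞} {s : ℝ} (hs : 0 ≤ s) (hab : a ≤ b) :
    b ^ (-s) ≤ a ^ (-s) := by
  rw [ENNReal.rpow_neg, ENNReal.rpow_neg]
  exact ENNReal.inv_le_inv.2 (ENNReal.rpow_le_rpow hab hs)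

lemma potential_zero {X : Type*} [MetricSpace X] [MeasurableSpace X]
    (μ : Measure X) (x : X) : potential μ 0 x = μ univ := by
  simp [potential]

lemma potential_lt_top {X : Type*} [MetricSpace X] [MeasurableSpace X] [BorelSpace X]
    (μ : Measure X) [IsFiniteMeasure μ] (x : X) {s t r0 : ℝ}
    (hs : 0 ≤ s) (hst : s < t) (hr0 : 0 < r0)
    (h : ∀ r : ℝ, 0 < r → r ≤ r0 → μ (closedBall x r) ≤ ENNReal.ofReal (r ^ t)) :
    potential μ s x < ⊤ := by
  rcases eq_or_lt_of_le hs with hs0 | hs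
  · rw [← hs0, potential_zero]
    exact measure_lt_top μ univ
  have ht : 0 < t := hs.trans hst
  -- radii
  set R : ℕ → ℝ := fun n => r0 * 2⁻¹ ^ n with hR
  have hb : (0:ℝ) < 2⁻¹ := by norm_num
  have hb1 : (2⁻¹:ℝ) < 1 := by norm_num
  have hRpos : ∀ n, 0 < R n := fun n => mul_pos hr0 (pow_pos hb n)
  have hRle : ∀ n, R n ≤ r0 := by
    intro n
    have : (2⁻¹:ℝ) ^ n ≤ 1 := pow_le_one₀ hb.le hb1.le
    calc R n = r0 * 2⁻¹ ^ n := rfl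
    _ ≤ r0 * 1 := by nlinarith
    _ = r0 := mul_one r0
  -- μ {x} = 0
  have hxnull : μ {x} = 0 := by
    have hle : ∀ n : ℕ, μ {x} ≤ ENNReal.ofReal (R n ^ t) := by
      intro n
      refine le_trans (measure_mono ?_) (h (R n) (hRpos n) (hRle n))
      intro y hy
      simp only [mem_singleton_iff] at hy
      simp [hy, mem_closedBall, (hRpos n).le]
    have htend : Tendsto (fun n : ℕ => ENNReal.ofReal (R n ^ t)) atTop (𝓝 0) := by
      have h1 : Tendsto R atTop (𝓝 0) := by
        have h0 := tendsto_pow_atTop_nhds_zero_of_lt_one hb.le hb1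
        have := h0.const_mul r0
        simpa [hR, inv_pow] using this
      have h2 : ContinuousAt (fun u : ℝ => ENNReal.ofReal (u ^ t)) 0 := by
        refine ENNReal.continuous_ofReal.continuousAt.comp ?_
        have := Real.continuousAt_rpow_const 0 t (Or.inr ht.le)
        exact this
      have := h2.tendsto.comp h1
      simpa [Real.zero_rpow ht.ne', Function.comp_def] using this
    exact le_antisymm (ge_of_tendsto' htend hle) (zero_le)
  classical
  set c : ℕ → ℝ≥0∞ := fun n => ENNReal.ofReal (R (n + 1) ^ (-s)) with hc
  set g : X → ℝ≥0∞ := fun y =>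
    ENNReal.ofReal (r0 ^ (-s)) + ∑' n : ℕ, (closedBall x (R n)).indicator (fun _ => c n) y with hg
  have hae : ∀ᵐ y ∂μ, y ≠ x := by
    rw [ae_iff]
    have hset : {y : X | ¬ y ≠ x} = {x} := by ext y; simp
    rw [hset]; exact hxnull
  have hpt : ∀ y : X, y ≠ x → edist x y ^ (-s) ≤ g y := by
    intro y hy
    have hd : 0 < dist x y := dist_pos.2 (Ne.symm hy)
    by_cases hcase : dist x y ≤ r0
    · obtain ⟨n, hn1, hn2⟩ : ∃ n : ℕ, R (n + 1) < dist x y ∧ dist x y ≤ R n := by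
        have hPm : ∃ m : ℕ, (2⁻¹ : ℝ) ^ (m + 1) < dist x y / r0 := by
          obtain ⟨m, hm⟩ := exists_pow_lt_of_lt_one (div_pos hd hr0) hb1
          exact ⟨m, lt_of_le_of_lt (pow_le_pow_of_le_one hb.le hb1.le (Nat.le_succ m)) hm⟩
        refine ⟨Nat.find hPm, ?_, ?_⟩
        · have hspec := Nat.find_spec hPm
          rw [lt_div_iff₀ hr0] at hspec
          calc R (Nat.find hPm + 1) = 2⁻¹ ^ (Nat.find hPm + 1) * r0 := by rw [hR]; ring
          _ < dist x y := hspec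
        · rcases Nat.eq_zero_or_pos (Nat.find hPm) with h0 | h0
          · rw [h0]
            simpa [hR] using hcase
          · obtain ⟨k, hk⟩ := Nat.exists_eq_succ_of_ne_zero h0.ne'
            rw [hk]
            have hmin : ¬ ((2⁻¹ : ℝ) ^ (k + 1) < dist x y / r0) :=
              Nat.find_min hPm (by omega)
            push_neg at hmin
            have := (div_le_iff₀ hr0).1 hmin
            calc dist x y ≤ 2⁻¹ ^ (k + 1) * r0 := this
            _ = R (k + 1) := by rw [hR]; ring
      have hyb : y ∈ closedBall x (R n) := by
        rw [mem_closedBall, dist_comm]; exact hn2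
      have hedist : ENNReal.ofReal (R (n + 1)) ≤ edist x y := by
        rw [edist_dist]; exact ENNReal.ofReal_le_ofReal hn1.le
      calc edist x y ^ (-s) ≤ (ENNReal.ofReal (R (n + 1))) ^ (-s) := rpow_neg_anti hs.le hedist
      _ = ENNReal.ofReal (R (n + 1) ^ (-s)) := ENNReal.ofReal_rpow_of_pos (hRpos (n + 1))
      _ = (closedBall x (R n)).indicator (fun _ => c n) y := by
          rw [indicator_of_mem hyb]
      _ ≤ ∑' k, (closedBall x (R k)).indicator (fun _ => c k) y := ENNReal.le_tsum n
      _ ≤ g y := self_le_add_left _ _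
    · push_neg at hcase
      have hedist : ENNReal.ofReal r0 ≤ edist x y := by
        rw [edist_dist]; exact ENNReal.ofReal_le_ofReal hcase.le
      calc edist x y ^ (-s) ≤ (ENNReal.ofReal r0) ^ (-s) := rpow_neg_anti hs.le hedist
      _ = ENNReal.ofReal (r0 ^ (-s)) := ENNReal.ofReal_rpow_of_pos hr0
      _ ≤ g y := self_le_add_right _ _
  have hint : potential μ s x ≤ ENNReal.ofReal (r0 ^ (-s)) * μ univ
      + ∑' n : ℕ, c n * μ (closedBall x (R n)) := by
    refine le_trans (lintegral_mono_ae (hae.mono hpt)) ?_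
    rw [hg]
    rw [lintegral_add_left measurable_const]
    refine add_le_add ?_ ?_
    · rw [lintegral_const]
    · rw [lintegral_tsum
        (fun n => ((measurable_const.indicator measurableSet_closedBall)).aemeasurable)]
      refine le_of_eq (tsum_congr fun n => ?_)
      rw [lintegral_indicator_const measurableSet_closedBall]
  set C : ℝ := r0 ^ (t - s) * (2⁻¹ : ℝ) ^ (-s) with hCdef
  set q : ℝ := (2⁻¹ : ℝ) ^ (t - s) with hqdef
  have hbn : ∀ m : ℕ, ((2⁻¹ : ℝ) ^ m : ℝ) = (2⁻¹ : ℝ) ^ (m : ℝ) :=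
    fun m => (Real.rpow_natCast (2⁻¹ : ℝ) m).symm
  have key : ∀ n : ℕ, R (n + 1) ^ (-s) * R n ^ t = C * q ^ n := by
    intro n
    rw [hR]
    simp only []
    rw [Real.mul_rpow hr0.le (pow_pos hb _).le, Real.mul_rpow hr0.le (pow_pos hb _).le,
        hbn (n + 1), hbn n, ← Real.rpow_natCast q n, hqdef,
        ← Real.rpow_mul hb.le, ← Real.rpow_mul hb.le, ← Real.rpow_mul hb.le]
    rw [hCdef]
    have h1 : r0 ^ (-s) * (2⁻¹:ℝ) ^ ((↑(n+1):ℝ) * -s) * (r0 ^ t * (2⁻¹:ℝ) ^ ((n:ℝ) * t))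
        = (r0 ^ (-s) * r0 ^ t) * ((2⁻¹:ℝ) ^ ((↑(n+1):ℝ) * -s) * (2⁻¹:ℝ) ^ ((n:ℝ) * t)) := by
      ring
    rw [h1, ← Real.rpow_add hr0, ← Real.rpow_add hb, mul_assoc, ← Real.rpow_add hb]
    congr 1
    · congr 1; ring
    · congr 1; push_cast; ring
  have hq0 : 0 ≤ q := Real.rpow_nonneg hb.le _
  have hq1 : q < 1 := Real.rpow_lt_one hb.le hb1 (sub_pos.2 hst)
  have hC0 : 0 ≤ C := mul_nonneg (Real.rpow_nonneg hr0.le _) (Real.rpow_nonneg hb.le _)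
  have hsum : ∑' n : ℕ, c n * μ (closedBall x (R n))
      ≤ ENNReal.ofReal C * (1 - ENNReal.ofReal q)⁻¹ := by
    have step : ∀ n : ℕ, c n * μ (closedBall x (R n))
        ≤ ENNReal.ofReal C * ENNReal.ofReal q ^ n := by
      intro n
      calc c n * μ (closedBall x (R n)) ≤ c n * ENNReal.ofReal (R n ^ t) :=
        mul_le_mul_right (h (R n) (hRpos n) (hRle n)) _
      _ = ENNReal.ofReal (R (n + 1) ^ (-s) * R n ^ t) := by
          rw [hc]; rw [← ENNReal.ofReal_mul (Real.rpow_nonneg (hRpos _).le _)]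
      _ = ENNReal.ofReal (C * q ^ n) := by rw [key n]
      _ = ENNReal.ofReal C * ENNReal.ofReal q ^ n := by
          rw [ENNReal.ofReal_mul hC0, ENNReal.ofReal_pow hq0]
    calc ∑' n : ℕ, c n * μ (closedBall x (R n))
        ≤ ∑' n : ℕ, ENNReal.ofReal C * ENNReal.ofReal q ^ n := ENNReal.tsum_le_tsum step
    _ = ENNReal.ofReal C * (1 - ENNReal.ofReal q)⁻¹ := by
        rw [ENNReal.tsum_mul_left, ENNReal.tsum_geometric]
  refine lt_of_le_of_lt (hint.trans (add_le_add_right hsum _)) ?_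
  rw [ENNReal.add_lt_top]
  constructor
  · exact ENNReal.mul_lt_top ENNReal.ofReal_lt_top (measure_lt_top μ univ)
  · refine ENNReal.mul_lt_top ENNReal.ofReal_lt_top ?_
    rw [ENNReal.inv_lt_top]
    rw [tsub_pos_iff_lt]
    exact ENNReal.ofReal_lt_one.2 hq1

lemma potential_eq_top {X : Type*} [MetricSpace X] [MeasurableSpace X] [BorelSpace X]
    (μ : Measure X) (x : X) {s t : ℝ} (hts : t < s) (hs : 0 ≤ s)
    (h : ∃ᶠ r in 𝓝[>] (0 : ℝ), ENNReal.ofReal (r ^ t) ≤ μ (closedBall x r)) :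
    potential μ s x = ⊤ := by
  have hlow : ∃ᶠ r in 𝓝[>] (0 : ℝ), ENNReal.ofReal (r ^ (t - s)) ≤ potential μ s x := by
    refine (h.and_eventually eventually_mem_nhdsWithin).mono ?_
    rintro r ⟨hr1, hr2⟩
    have hr : (0 : ℝ) < r := hr2
    have step1 : ENNReal.ofReal (r ^ (t - s))
        ≤ ENNReal.ofReal r ^ (-s) * μ (closedBall x r) := by
      have he : ENNReal.ofReal (r ^ (t - s))
          = ENNReal.ofReal (r ^ (-s)) * ENNReal.ofReal (r ^ t) := by
        rw [← ENNReal.ofReal_mul (Real.rpow_nonneg hr.le _), ← Real.rpow_add hr]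
        ring_nf
      rw [he, ENNReal.ofReal_rpow_of_pos hr]
      exact mul_le_mul_right hr1 _
    refine step1.trans ?_
    calc ENNReal.ofReal r ^ (-s) * μ (closedBall x r)
        = ∫⁻ _ in closedBall x r, ENNReal.ofReal r ^ (-s) ∂μ := (setLIntegral_const _ _).symm
      _ ≤ ∫⁻ y in closedBall x r, edist x y ^ (-s) ∂μ := by
          refine setLIntegral_mono
            (ENNReal.continuous_rpow_const.measurable.comp measurable_edist_right) ?_
          intro y hy
          refine rpow_neg_anti hs ?_
          rw [edist_dist]
          exact ENNReal.ofReal_le_ofReal (by rw [dist_comm]; exact hy)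
      _ ≤ potential μ s x := setLIntegral_le_lintegral _ _
  have htend : Tendsto (fun r : ℝ => ENNReal.ofReal (r ^ (t - s))) (𝓝[>] 0) (𝓝 ⊤) := by
    have h1 : Tendsto (fun r : ℝ => r ^ (t - s)) (𝓝[>] 0) atTop := by
      have h2 : Tendsto (fun r : ℝ => (r⁻¹) ^ (s - t)) (𝓝[>] 0) atTop :=
        (tendsto_rpow_atTop (by linarith)).comp tendsto_inv_nhdsGT_zero
      refine h2.congr' ?_
      filter_upwards [eventually_mem_nhdsWithin] with r hr
      rw [← Real.rpow_neg_one r, ← Real.rpow_mul (le_of_lt hr)]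
      ring_nf
    exact ENNReal.tendsto_ofReal_atTop.comp h1
  by_contra hne
  have hlt : potential μ s x < ⊤ := lt_top_iff_ne_top.2 hne
  have hev : ∀ᶠ r : ℝ in 𝓝[>] 0,
      potential μ s x < ENNReal.ofReal (r ^ (t - s)) :=
    htend.eventually (eventually_gt_nhds hlt)
  obtain ⟨r, hr1, hr2⟩ := (hlow.and_eventually hev).exists
  exact absurd hr1 (not_le.2 hr2)

lemma aux_le_rpow {a : ℝ≥0∞} (ha : a ≠ ⊤) {r t : ℝ} (hr0 : 0 < r) (hr1 : r < 1)
    (h : t ≤ Real.log a.toReal / Real.log r) : a ≤ ENNReal.ofReal (r ^ t) := by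
  rcases eq_or_ne a 0 with h0 | h0
  · simp [h0]
  have hL : Real.log r < 0 := Real.log_neg hr0 hr1
  have hpos : 0 < a.toReal := ENNReal.toReal_pos h0 ha
  have hlog : Real.log a.toReal ≤ t * Real.log r := by
    have h2 := mul_le_mul_of_nonpos_right h hL.le
    rwa [div_mul_cancel₀ _ hL.ne] at h2
  have hle : a.toReal ≤ r ^ t := by
    calc a.toReal = Real.exp (Real.log a.toReal) := (Real.exp_log hpos).symm
    _ ≤ Real.exp (Real.log (r ^ t)) := by
        refine Real.exp_le_exp.2 ?_; rw [Real.log_rpow hr0]; exact hlog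
    _ = r ^ t := Real.exp_log (Real.rpow_pos_of_pos hr0 t)
  calc a = ENNReal.ofReal a.toReal := (ENNReal.ofReal_toReal ha).symm
  _ ≤ ENNReal.ofReal (r ^ t) := ENNReal.ofReal_le_ofReal hle

lemma aux_rpow_le {a : ℝ≥0∞} (ha : a ≠ ⊤) (h0 : a ≠ 0) {r t : ℝ} (hr0 : 0 < r) (hr1 : r < 1)
    (h : Real.log a.toReal / Real.log r ≤ t) : ENNReal.ofReal (r ^ t) ≤ a := by
  have hL : Real.log r < 0 := Real.log_neg hr0 hr1
  have hpos : 0 < a.toReal := ENNReal.toReal_pos h0 ha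
  have hlog : t * Real.log r ≤ Real.log a.toReal := by
    have h2 := mul_le_mul_of_nonpos_right h hL.le
    rwa [div_mul_cancel₀ _ hL.ne] at h2
  have hle : r ^ t ≤ a.toReal := by
    calc r ^ t = Real.exp (Real.log (r ^ t)) := (Real.exp_log (Real.rpow_pos_of_pos hr0 t)).symm
    _ ≤ Real.exp (Real.log a.toReal) := by
        refine Real.exp_le_exp.2 ?_; rw [Real.log_rpow hr0]; exact hlog
    _ = a.toReal := Real.exp_log hpos
  calc ENNReal.ofReal (r ^ t) ≤ ENNReal.ofReal a.toReal := ENNReal.ofReal_le_ofReal hle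
  _ = a := ENNReal.ofReal_toReal ha

theorem lowerLocalDim_eq_potential {X : Type*} [MetricSpace X] [CompactSpace X]
    [MeasurableSpace X] [BorelSpace X]
    (μ : Measure X) [IsFiniteMeasure μ] [μ.Regular] (x : X) :
    lowerLocalDim μ x = sInf {s : ℝ | 0 ≤ s ∧ potential μ s x = ⊤} ∧
    lowerLocalDim μ x = sSup {s : ℝ | 0 ≤ s ∧ potential μ s x < ⊤} := by
  set F : ℝ → ℝ := fun r => Real.log (μ (closedBall x r)).toReal / Real.log r with hF
  set S : Set ℝ := {a : ℝ | ∀ᶠ r in 𝓝[>] (0:ℝ), a ≤ F r} with hS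
  have hdim : lowerLocalDim μ x = sSup S := by
    rw [lowerLocalDim, Filter.liminf_eq]
  set T : Set ℝ := {s : ℝ | 0 ≤ s ∧ potential μ s x = ⊤} with hT
  set Fn : Set ℝ := {s : ℝ | 0 ≤ s ∧ potential μ s x < ⊤} with hFn
  have hzero : (0:ℝ) ∈ Fn := ⟨le_refl 0, by rw [potential_zero]; exact measure_lt_top μ univ⟩
  have hsmall : ∀ᶠ r in 𝓝[>] (0:ℝ), 0 < r ∧ r < 1 := by
    filter_upwards [Ioo_mem_nhdsGT_of_mem (show (0:ℝ) ∈ Ico (0:ℝ) 1 by constructor <;> norm_num)]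
      with r hr
    exact ⟨hr.1, hr.2⟩
  -- (A) membership in S forces finiteness below
  have hA : ∀ t ∈ S, ∀ s : ℝ, 0 ≤ s → s < t → potential μ s x < ⊤ := by
    intro t ht s hs hst
    have hev : ∀ᶠ r in 𝓝[>] (0:ℝ), μ (closedBall x r) ≤ ENNReal.ofReal (r ^ t) := by
      filter_upwards [ht, hsmall] with r h1 h2
      exact aux_le_rpow (measure_ne_top μ _) h2.1 h2.2 h1
    obtain ⟨r0, hr0, hsub⟩ := mem_nhdsGT_iff_exists_Ioc_subset.1 hev
    exact potential_lt_top μ x hs hst hr0 (fun r hrr hrr' => hsub ⟨hrr, hrr'⟩)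
  -- (B) non-membership forces infiniteness above, if all balls have positive measure
  have hB : (∀ r : ℝ, 0 < r → μ (closedBall x r) ≠ 0) →
      ∀ t ∉ S, ∀ s : ℝ, 0 ≤ s → t < s → potential μ s x = ⊤ := by
    intro hpos t ht s hs hst
    have hfreq : ∃ᶠ r in 𝓝[>] (0:ℝ), ¬ t ≤ F r := Filter.not_eventually.1 ht
    have hfreq2 : ∃ᶠ r in 𝓝[>] (0:ℝ), ENNReal.ofReal (r ^ t) ≤ μ (closedBall x r) := by
      refine (hfreq.and_eventually hsmall).mono ?_
      rintro r ⟨h1, h2, h3⟩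
      exact aux_rpow_le (measure_ne_top μ _) (hpos r h2) h2 h3 (not_le.1 h1).le
    exact potential_eq_top μ x hst hs hfreq2
  -- negative reals are in S
  have hneg : ∀ a : ℝ, a < 0 → a ∈ S := by
    intro a ha
    have htends : Tendsto (fun r : ℝ => Real.log (μ univ).toReal / Real.log r)
        (𝓝[>] (0:ℝ)) (𝓝 0) := by
      have h1 : Tendsto (fun r : ℝ => -Real.log r) (𝓝[>] (0:ℝ)) atTop :=
        tendsto_neg_atBot_atTop.comp Real.tendsto_log_nhdsGT_zero
      have h2 := (tendsto_const_nhds (x := -Real.log (μ univ).toReal)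
        (f := 𝓝[>] (0:ℝ))).div_atTop h1
      refine h2.congr fun r => ?_
      exact neg_div_neg_eq _ _
    have hgt : ∀ᶠ r in 𝓝[>] (0:ℝ), a < Real.log (μ univ).toReal / Real.log r :=
      htends.eventually (eventually_gt_nhds ha)
    filter_upwards [hgt, hsmall] with r h1 h2
    rcases eq_or_ne (μ (closedBall x r)) 0 with hz | hz
    · show a ≤ Real.log (μ (closedBall x r)).toReal / Real.log r
      rw [hz]
      simpa using ha.le
    · have hL : Real.log r < 0 := Real.log_neg h2.1 h2.2
      have hnum : Real.log (μ (closedBall x r)).toReal ≤ Real.log (μ univ).toReal :=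
        Real.log_le_log (ENNReal.toReal_pos hz (measure_ne_top μ _))
          (ENNReal.toReal_mono (measure_ne_top μ _) (measure_mono (subset_univ _)))
      have h3 : Real.log (μ univ).toReal / Real.log r
          ≤ Real.log (μ (closedBall x r)).toReal / Real.log r :=
        div_le_div_of_nonpos_of_le hL.le hnum
      show a ≤ Real.log (μ (closedBall x r)).toReal / Real.log r
      linarith
  -- common endgame
  have hTrivial : (∀ s : ℝ, 0 ≤ s → potential μ s x < ⊤) → lowerLocalDim μ x = 0 →
      (lowerLocalDim μ x = sInf T ∧ lowerLocalDim μ x = sSup Fn) := by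
    intro hall hdim0
    have hTe : T = ∅ := by
      ext s
      simp only [hT, mem_setOf_eq, mem_empty_iff_false, iff_false, not_and]
      intro hs
      exact (hall s hs).ne
    have hFe : Fn = Ici 0 := by
      ext s
      simp only [hFn, mem_setOf_eq, mem_Ici]
      exact ⟨fun h => h.1, fun h => ⟨h, hall s h⟩⟩
    constructor
    · rw [hdim0, hTe, Real.sInf_empty]
    · rw [hdim0, hFe, Real.sSup_of_not_bddAbove (not_bddAbove_Ici (0:ℝ))]
  by_cases hcase : ∀ r : ℝ, 0 < r → μ (closedBall x r) ≠ 0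
  · by_cases hbdd : BddAbove S
    · have hSne : S.Nonempty := ⟨-1, hneg (-1) (by norm_num)⟩
      set d : ℝ := sSup S with hd
      have hd0 : 0 ≤ d := by
        by_contra hlt
        push_neg at hlt
        have h1 : d / 2 ∈ S := hneg _ (by linarith)
        have := le_csSup hbdd h1
        linarith
      have hT1 : ∀ s ∈ T, d ≤ s := by
        intro s hsT
        by_contra hlt
        push_neg at hlt
        obtain ⟨t, htS, hst⟩ := exists_lt_of_lt_csSup hSne hlt
        exact absurd hsT.2 (hA t htS s hsT.1 hst).ne
      have hT2 : ∀ s : ℝ, d < s → s ∈ T := by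
        intro s hds
        have htS : (d + s) / 2 ∉ S := by
          intro hmem
          have := le_csSup hbdd hmem
          linarith
        exact ⟨by linarith, hB hcase _ htS s (by linarith) (by linarith)⟩
      have hF1 : ∀ s ∈ Fn, s ≤ d := by
        intro s hsF
        by_contra hlt
        push_neg at hlt
        exact absurd (hT2 s hlt).2 hsF.2.ne
      have hF2 : ∀ s : ℝ, 0 ≤ s → s < d → s ∈ Fn := by
        intro s hs0 hsd
        obtain ⟨t, htS, hst⟩ := exists_lt_of_lt_csSup hSne hsd
        exact ⟨hs0, hA t htS s hs0 hst⟩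
      have hTne : T.Nonempty := ⟨d + 1, hT2 _ (by linarith)⟩
      have hInf : sInf T = d := by
        refine le_antisymm ?_ (le_csInf hTne hT1)
        by_contra hlt
        push_neg at hlt
        have hmem : (d + sInf T) / 2 ∈ T := hT2 _ (by linarith)
        have := csInf_le ⟨d, hT1⟩ hmem
        linarith
      have hSup : sSup Fn = d := by
        refine le_antisymm (csSup_le ⟨0, hzero⟩ hF1) ?_
        by_contra hlt
        push_neg at hlt
        have hs0 : 0 ≤ sSup Fn := le_csSup ⟨d, hF1⟩ hzero
        have hmem : max ((sSup Fn + d) / 2) 0 ∈ Fn :=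
          hF2 _ (le_max_right _ _) (max_lt (by linarith) (by linarith))
        have h4 := le_csSup ⟨d, hF1⟩ hmem
        have h3 : (sSup Fn + d) / 2 ≤ sSup Fn := le_trans (le_max_left _ _) h4
        linarith
      rw [hdim, hInf, hSup]
      exact ⟨rfl, rfl⟩
    · have hall : ∀ s : ℝ, 0 ≤ s → potential μ s x < ⊤ := by
        intro s hs
        obtain ⟨t, htS, hst⟩ := not_bddAbove_iff.1 hbdd s
        exact hA t htS s hs hst
      have hdim0 : lowerLocalDim μ x = 0 := by
        rw [hdim]
        exact Real.sSup_of_not_bddAbove hbdd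
      exact hTrivial hall hdim0
  · push_neg at hcase
    obtain ⟨r0, hr0, hr0z⟩ := hcase
    have hz : ∀ r : ℝ, 0 < r → r ≤ r0 → μ (closedBall x r) = 0 := fun r h1 h2 =>
      measure_mono_null (closedBall_subset_closedBall h2) hr0z
    have hall : ∀ s : ℝ, 0 ≤ s → potential μ s x < ⊤ := by
      intro s hs
      refine potential_lt_top μ x hs (lt_add_one s) hr0 (fun r h1 h2 => ?_)
      rw [hz r h1 h2]
      exact zero_le
    have hdim0 : lowerLocalDim μ x = 0 := by
      rw [lowerLocalDim]
      have hcongr : ∀ᶠ r in 𝓝[>] (0:ℝ),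
          Real.log (μ (closedBall x r)).toReal / Real.log r = (0:ℝ) := by
        filter_upwards [Ioc_mem_nhdsGT hr0] with r hr
        rw [hz r hr.1 hr.2]
        simp
      rw [Filter.liminf_congr hcongr]
      exact Filter.liminf_const 0
    exact hTrivial hall hdim0
end

section
/- For a finite Borel regular measure μ on a compact metric space, the correlation dimension of μ, defined as sup{s : I_s(μ) < ∞} where I_s(μ) = ∬ d(x,y)^{-s} dμ(x) dμ(y), equals liminf_{r→0} log(∫ μ(B(x,r)) dμ(x)) / log r. -/
open MeasureTheory Filter Metric Set Topology
open scoped ENNReal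

/-- The upper local dimension of a measure at a point. -/
noncomputable def upperLocalDim {X : Type*} [MetricSpace X] [MeasurableSpace X]
    (μ : Measure X) (x : X) : ℝ :=
  limsup (fun r : ℝ => Real.log (μ (closedBall x r)).toReal / Real.log r) (𝓝[>] 0)

/-- The `s`-energy of `μ`. -/
noncomputable def energy {X : Type*} [MetricSpace X] [MeasurableSpace X]
    (μ : Measure X) (s : ℝ) : ℝ≥0∞ :=
  ∫⁻ x, ∫⁻ y, edist x y ^ (-s) ∂μ ∂μ

/-- The correlation dimension of `μ`: `sup { s : I_s(μ) < ∞ }`. -/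
noncomputable def corrDim {X : Type*} [MetricSpace X] [MeasurableSpace X]
    (μ : Measure X) : ℝ :=
  sSup {s : ℝ | energy μ s < ⊤}

/-- The lower Hausdorff dimension of `μ`: the `μ`-essential infimum of the
lower local dimension. -/
noncomputable def lowerHausdorffDim {X : Type*} [MetricSpace X] [MeasurableSpace X]
    (μ : Measure X) : ℝ :=
  essInf (fun x => lowerLocalDim μ x) μ

/-! ### Auxiliary lemmas -/

lemma sSup_eq_sSup_of_between {S T : Set ℝ} (hS : S.Nonempty) (hT : T.Nonempty)
    (h1 : ∀ s ∈ S, Iio s ⊆ T) (h2 : ∀ a ∈ T, Iio a ⊆ S) : sSup S = sSup T := by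
  have key : ∀ {A B : Set ℝ}, A.Nonempty → (∀ s ∈ A, Iio s ⊆ B) → BddAbove B →
      sSup A ≤ sSup B := by
    intro A B hA h hB
    apply csSup_le hA
    intro s hs
    by_contra hc
    push_neg at hc
    obtain ⟨c, hc1, hc2⟩ := exists_between hc
    exact absurd (le_csSup hB (h s hs hc2)) (not_le.2 hc1)
  have unb : ∀ {A B : Set ℝ}, (∀ s ∈ A, Iio s ⊆ B) → ¬ BddAbove A → ¬ BddAbove B := by
    intro A B h hA hB
    apply hA
    obtain ⟨b, hb⟩ := hB
    refine ⟨b + 1, fun s hs => ?_⟩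
    by_contra hc
    push_neg at hc
    have hmem : b + 1/2 ∈ B := h s hs (by simp only [mem_Iio]; linarith)
    have := hb hmem
    linarith
  by_cases hbS : BddAbove S <;> by_cases hbT : BddAbove T
  · exact le_antisymm (key hS h1 hbT) (key hT h2 hbS)
  · exact absurd hbS (unb h2 hbT)
  · exact absurd hbT (unb h1 hbS)
  · rw [Real.sSup_of_not_bddAbove hbS, Real.sSup_of_not_bddAbove hbT]

section Aux
variable {X : Type*} [MetricSpace X] [CompactSpace X] [MeasurableSpace X] [BorelSpace X]
  (μ : Measure X) [IsFiniteMeasure μ]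

set_option linter.unusedSectionVars false

lemma meas_kernel (s : ℝ) : Measurable fun p : X × X => edist p.1 p.2 ^ (-s) :=
  (ENNReal.continuous_rpow_const.measurable).comp measurable_edist

lemma meas_kernel_left (s : ℝ) (x : X) : Measurable fun y : X => edist x y ^ (-s) :=
  (ENNReal.continuous_rpow_const.comp (continuous_const.edist continuous_id)).measurable

lemma energy_eq_prod (s : ℝ) :
    energy μ s = ∫⁻ p : X × X, edist p.1 p.2 ^ (-s) ∂(μ.prod μ) :=
  (lintegral_prod _ (meas_kernel s).aemeasurable).symm

lemma measSet_edist_le (c : ℝ≥0∞) : MeasurableSet {p : X × X | edist p.1 p.2 ≤ c} :=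
  measurableSet_le measurable_edist measurable_const

lemma Ebar_eq_prod {r : ℝ} (hr : 0 ≤ r) :
    (∫⁻ x, μ (closedBall x r) ∂μ)
      = (μ.prod μ) {p : X × X | edist p.1 p.2 ≤ ENNReal.ofReal r} := by
  rw [Measure.prod_apply (measSet_edist_le _)]
  congr 1
  ext x
  congr 1
  ext y
  simp only [mem_preimage, mem_setOf_eq, mem_closedBall, edist_le_ofReal hr, dist_comm]

lemma Ebar_lt_top (r : ℝ) : (∫⁻ x, μ (closedBall x r) ∂μ) < ⊤ := by
  calc (∫⁻ x, μ (closedBall x r) ∂μ) ≤ ∫⁻ _x, μ univ ∂μ :=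
        lintegral_mono fun x => measure_mono (subset_univ _)
    _ = μ univ * μ univ := lintegral_const _
    _ < ⊤ := ENNReal.mul_lt_top (measure_lt_top μ _) (measure_lt_top μ _)

lemma Ebar_mono {r r' : ℝ} (h : r ≤ r') :
    (∫⁻ x, μ (closedBall x r) ∂μ) ≤ ∫⁻ x, μ (closedBall x r') ∂μ :=
  lintegral_mono fun x => measure_mono (closedBall_subset_closedBall h)

lemma energy_lt_top_of_nonpos {s : ℝ} (hs : s ≤ 0) : energy μ s < ⊤ := by
  set C := EMetric.diam (univ : Set X) with hC
  have hCt : C ≠ ⊤ := (Metric.isBounded_of_compactSpace (s := univ)).ediam_ne_top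
  have hb : ∀ x y : X, edist x y ^ (-s) ≤ C ^ (-s) := fun x y =>
    ENNReal.rpow_le_rpow (EMetric.edist_le_diam_of_mem (mem_univ _) (mem_univ _)) (by linarith)
  calc energy μ s ≤ ∫⁻ _x, ∫⁻ _y, C ^ (-s) ∂μ ∂μ :=
        lintegral_mono fun x => lintegral_mono fun y => hb x y
    _ = C ^ (-s) * μ univ * μ univ := by rw [lintegral_const, lintegral_const]
    _ < ⊤ := by
        have h1 : C ^ (-s) < ⊤ := ENNReal.rpow_lt_top_of_nonneg (by linarith) hCt
        exact ENNReal.mul_lt_top (ENNReal.mul_lt_top h1 (measure_lt_top μ _)) (measure_lt_top μ _)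

lemma Ebar_le_rpow_mul_energy {s r : ℝ} (hs : 0 ≤ s) (hr : 0 < r) :
    (∫⁻ x, μ (closedBall x r) ∂μ) ≤ ENNReal.ofReal r ^ s * energy μ s := by
  have heq : (ENNReal.ofReal r : ℝ≥0∞) ^ s = ENNReal.ofReal (r ^ s) :=
    ENNReal.ofReal_rpow_of_pos hr
  have hpow0 : (ENNReal.ofReal r : ℝ≥0∞) ^ s ≠ 0 := by
    rw [heq]; exact (ENNReal.ofReal_pos.2 (Real.rpow_pos_of_pos hr s)).ne'
  have hpowt : (ENNReal.ofReal r : ℝ≥0∞) ^ s ≠ ⊤ := by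
    rw [heq]; exact ENNReal.ofReal_ne_top
  have step1 : ∀ x : X, μ (closedBall x r) ≤ ENNReal.ofReal r ^ s * potential μ s x := by
    intro x
    rw [← setLIntegral_one (closedBall x r)]
    calc ∫⁻ _y in closedBall x r, 1 ∂μ
        ≤ ∫⁻ y in closedBall x r, ENNReal.ofReal r ^ s * edist x y ^ (-s) ∂μ := by
          apply setLIntegral_mono ((meas_kernel_left s x).const_mul _)
          intro y hy
          have hd : edist x y ≤ ENNReal.ofReal r := by
            rw [edist_le_ofReal hr.le, dist_comm]; exact hy
          have h1 : edist x y ^ s ≤ (ENNReal.ofReal r) ^ s := ENNReal.rpow_le_rpow hd hs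
          have h2 : (ENNReal.ofReal r) ^ (-s) ≤ edist x y ^ (-s) := by
            rw [ENNReal.rpow_neg, ENNReal.rpow_neg]
            exact ENNReal.inv_le_inv.2 h1
          calc (1:ℝ≥0∞) = ENNReal.ofReal r ^ s * ENNReal.ofReal r ^ (-s) := by
                rw [ENNReal.rpow_neg, ENNReal.mul_inv_cancel hpow0 hpowt]
            _ ≤ ENNReal.ofReal r ^ s * edist x y ^ (-s) := mul_le_mul_right h2 _
      _ ≤ ∫⁻ y, ENNReal.ofReal r ^ s * edist x y ^ (-s) ∂μ :=
          setLIntegral_le_lintegral _ _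
      _ = ENNReal.ofReal r ^ s * potential μ s x := by
          rw [potential, lintegral_const_mul _ (meas_kernel_left s x)]
  calc (∫⁻ x, μ (closedBall x r) ∂μ) ≤ ∫⁻ x, ENNReal.ofReal r ^ s * potential μ s x ∂μ :=
        lintegral_mono step1
    _ = ENNReal.ofReal r ^ s * energy μ s := by
        have hm : Measurable (potential μ s) := (meas_kernel s).lintegral_prod_right'
        rw [lintegral_const_mul _ hm]
        rfl

lemma energy_lt_top_of_Ebar_zero {r₁ : ℝ} (hr : 0 < r₁)
    (h0 : (∫⁻ x, μ (closedBall x r₁) ∂μ) = 0) (s : ℝ) : energy μ s < ⊤ := by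
  rcases le_or_gt s 0 with hs | hs
  · exact energy_lt_top_of_nonpos μ hs
  have hanti : ∀ {e d : ℝ≥0∞}, d ≤ e → e ^ (-s) ≤ d ^ (-s) := by
    intro e d hde
    rw [ENNReal.rpow_neg, ENNReal.rpow_neg]
    exact ENNReal.inv_le_inv.2 (ENNReal.rpow_le_rpow hde hs.le)
  set A := {p : X × X | edist p.1 p.2 ≤ ENNReal.ofReal r₁} with hA
  have hA0 : (μ.prod μ) A = 0 := by rw [← Ebar_eq_prod μ hr.le]; exact h0
  have e1 : energy μ s = ∫⁻ p in A ∪ Aᶜ, edist p.1 p.2 ^ (-s) ∂(μ.prod μ) := by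
    rw [union_compl_self, setLIntegral_univ, energy_eq_prod]
  rw [e1]
  refine lt_of_le_of_lt (lintegral_union_le _ _ _) ?_
  rw [setLIntegral_measure_zero _ _ hA0, zero_add]
  calc ∫⁻ p in Aᶜ, edist p.1 p.2 ^ (-s) ∂(μ.prod μ)
      ≤ ∫⁻ _p in Aᶜ, ENNReal.ofReal (r₁ ^ (-s)) ∂(μ.prod μ) := by
        apply setLIntegral_mono measurable_const
        intro p hp
        simp only [mem_compl_iff, hA, mem_setOf_eq] at hp
        have hlow : ENNReal.ofReal r₁ ≤ edist p.1 p.2 := (not_le.1 hp).le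
        calc edist p.1 p.2 ^ (-s) ≤ (ENNReal.ofReal r₁) ^ (-s) := hanti hlow
          _ = ENNReal.ofReal (r₁ ^ (-s)) := ENNReal.ofReal_rpow_of_pos hr
    _ = ENNReal.ofReal (r₁ ^ (-s)) * (μ.prod μ) Aᶜ := setLIntegral_const _ _
    _ < ⊤ := ENNReal.mul_lt_top ENNReal.ofReal_lt_top (measure_lt_top _ _)

lemma energy_lt_top_of_decay {s a r₀ : ℝ} (hs : 0 < s) (hsa : s < a)
    (hr₀ : 0 < r₀)
    (hE : ∀ r ∈ Ioo (0:ℝ) r₀, (∫⁻ x, μ (closedBall x r) ∂μ) ≤ ENNReal.ofReal (r ^ a)) :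
    energy μ s < ⊤ := by
  set h : ℝ := 1/2 with hh
  have h0 : (0:ℝ) < h := by norm_num
  have h1 : h < 1 := by norm_num
  obtain ⟨n₀, hn₀⟩ : ∃ n, h ^ n < r₀ := exists_pow_lt_of_lt_one hr₀ h1
  set c : ℕ → ℝ := fun n => h ^ (n + n₀) with hc
  have hcpos : ∀ n, 0 < c n := fun n => pow_pos h0 _
  have hcr₀ : ∀ n, c n < r₀ := fun n =>
    lt_of_le_of_lt (pow_le_pow_of_le_one h0.le h1.le (Nat.le_add_left n₀ n)) hn₀
  set P := μ.prod μ with hP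
  set g : X × X → ℝ≥0∞ := fun p => edist p.1 p.2 ^ (-s) with hg
  have hEc : ∀ n, P {p : X × X | edist p.1 p.2 ≤ ENNReal.ofReal (c n)}
      ≤ ENNReal.ofReal ((c n) ^ a) := fun n => by
    rw [← Ebar_eq_prod μ (hcpos n).le]
    exact hE _ ⟨hcpos n, hcr₀ n⟩
  have hanti : ∀ {e d : ℝ≥0∞}, d ≤ e → e ^ (-s) ≤ d ^ (-s) := by
    intro e d hde
    rw [ENNReal.rpow_neg, ENNReal.rpow_neg]
    exact ENNReal.inv_le_inv.2 (ENNReal.rpow_le_rpow hde hs.le)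
  have hpow : ∀ (t : ℝ) (m : ℕ), ((h ^ m : ℝ)) ^ t = (h ^ t) ^ m := by
    intro t m
    rw [← Real.rpow_natCast h m, ← Real.rpow_mul h0.le, mul_comm, Real.rpow_mul h0.le,
      Real.rpow_natCast]
  set Z : Set (X × X) := {p | edist p.1 p.2 = 0} with hZ
  have hZ0 : P Z = 0 := by
    have hb : ∀ n, P Z ≤ ENNReal.ofReal ((c n) ^ a) := fun n =>
      le_trans (measure_mono (fun p hp => by
        simp only [hZ, mem_setOf_eq] at hp
        simp only [mem_setOf_eq, hp]
        exact zero_le)) (hEc n)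
    have htend : Tendsto (fun n : ℕ => ENNReal.ofReal ((c n) ^ a)) atTop (𝓝 0) := by
      have hrw : ∀ n : ℕ, (c n) ^ a = (h ^ a) ^ n₀ * (h ^ a) ^ n := by
        intro n
        show ((h : ℝ) ^ (n + n₀)) ^ a = _
        rw [hpow a (n + n₀), pow_add, mul_comm]
      simp_rw [hrw]
      rw [show (0:ℝ≥0∞) = ENNReal.ofReal ((h^(a:ℝ))^(n₀:ℕ) * 0) by simp]
      exact ENNReal.tendsto_ofReal
        ((tendsto_pow_atTop_nhds_zero_of_lt_one (Real.rpow_nonneg h0.le a)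
          (Real.rpow_lt_one h0.le h1 (by linarith))).const_mul _)
    exact le_antisymm (ge_of_tendsto' htend hb) zero_le
  set U0 : Set (X × X) := {p | ENNReal.ofReal (c 0) < edist p.1 p.2} with hU0
  set V : ℕ → Set (X × X) := fun n =>
    {p | edist p.1 p.2 ≤ ENNReal.ofReal (c n)} \ {p | edist p.1 p.2 ≤ ENNReal.ofReal (c (n+1))}
    with hV
  have hcover : (univ : Set (X × X)) ⊆ Z ∪ (U0 ∪ ⋃ n, V n) := by
    intro p _
    rcases eq_or_ne (edist p.1 p.2) 0 with he | he
    · exact Or.inl he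
    right
    have hd : 0 < dist p.1 p.2 := by
      rw [dist_pos]
      intro hpq
      exact he (by rw [hpq, edist_self])
    rcases lt_or_ge (c 0) (dist p.1 p.2) with hlt | hle
    · left
      show ENNReal.ofReal (c 0) < edist p.1 p.2
      rw [edist_dist]
      exact (ENNReal.ofReal_lt_ofReal_iff hd).2 hlt
    · right
      obtain ⟨k, hk⟩ : ∃ k, h ^ k < dist p.1 p.2 := exists_pow_lt_of_lt_one hd h1
      have hex : ∃ k, c k < dist p.1 p.2 :=
        ⟨k, lt_of_le_of_lt (pow_le_pow_of_le_one h0.le h1.le (Nat.le_add_right k n₀)) hk⟩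
      have hm0 : Nat.find hex ≠ 0 := by
        intro h00
        have := Nat.find_spec hex
        rw [h00] at this
        exact absurd this (not_lt.2 hle)
      refine mem_iUnion.2 ⟨Nat.find hex - 1, ?_, ?_⟩
      · show edist p.1 p.2 ≤ ENNReal.ofReal (c (Nat.find hex - 1))
        rw [edist_dist]
        apply ENNReal.ofReal_le_ofReal
        have := Nat.find_min hex (Nat.pred_lt hm0)
        exact not_lt.1 this
      · show ¬ edist p.1 p.2 ≤ ENNReal.ofReal (c (Nat.find hex - 1 + 1))
        have heq : Nat.find hex - 1 + 1 = Nat.find hex :=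
          Nat.succ_pred_eq_of_pos (Nat.pos_of_ne_zero hm0)
        rw [heq, edist_dist]
        exact not_le.2 ((ENNReal.ofReal_lt_ofReal_iff hd).2 (Nat.find_spec hex))
  have hmeasV : ∀ n, P (V n) ≤ ENNReal.ofReal ((c n) ^ a) :=
    fun n => le_trans (measure_mono diff_subset) (hEc n)
  set q : ℝ := h ^ (a - s) with hq
  set K : ℝ := ((h : ℝ) ^ (-s : ℝ)) ^ (1 + n₀) * ((h : ℝ) ^ (a : ℝ)) ^ n₀ with hK
  have hq0 : 0 ≤ q := Real.rpow_nonneg h0.le _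
  have hq1 : q < 1 := Real.rpow_lt_one h0.le h1 (by linarith)
  have hK0 : 0 ≤ K := mul_nonneg (pow_nonneg (Real.rpow_nonneg h0.le _) _)
    (pow_nonneg (Real.rpow_nonneg h0.le _) _)
  have hVbound : ∀ n, ∫⁻ p in V n, g p ∂P ≤ ENNReal.ofReal K * ENNReal.ofReal q ^ n := by
    intro n
    have hb : ∀ p ∈ V n, g p ≤ ENNReal.ofReal ((c (n+1)) ^ (-s)) := by
      intro p hp
      have hlow : ENNReal.ofReal (c (n+1)) ≤ edist p.1 p.2 := (not_le.1 hp.2).le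
      calc g p ≤ (ENNReal.ofReal (c (n+1))) ^ (-s) := hanti hlow
        _ = ENNReal.ofReal ((c (n+1)) ^ (-s)) := ENNReal.ofReal_rpow_of_pos (hcpos _)
    calc ∫⁻ p in V n, g p ∂P ≤ ∫⁻ _p in V n, ENNReal.ofReal ((c (n+1)) ^ (-s)) ∂P :=
          setLIntegral_mono measurable_const hb
      _ = ENNReal.ofReal ((c (n+1)) ^ (-s)) * P (V n) := setLIntegral_const _ _
      _ ≤ ENNReal.ofReal ((c (n+1)) ^ (-s)) * ENNReal.ofReal ((c n) ^ a) :=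
          mul_le_mul_right (hmeasV n) _
      _ = ENNReal.ofReal ((c (n+1)) ^ (-s) * (c n) ^ a) :=
          (ENNReal.ofReal_mul (Real.rpow_nonneg (hcpos _).le _)).symm
      _ = ENNReal.ofReal (K * q ^ n) := by
          congr 1
          show ((h:ℝ) ^ (n + 1 + n₀)) ^ (-s) * ((h:ℝ) ^ (n + n₀)) ^ a = K * q ^ n
          rw [hpow (-s) (n+1+n₀), hpow a (n+n₀), hK]
          have hqq : q = (h:ℝ) ^ (a:ℝ) * (h:ℝ) ^ (-s:ℝ) := by
            rw [hq, ← Real.rpow_add h0]; ring_nf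
          rw [hqq, mul_pow]
          ring
      _ = ENNReal.ofReal K * ENNReal.ofReal q ^ n := by
          rw [ENNReal.ofReal_mul hK0, ENNReal.ofReal_pow hq0]
  have hU0bound : ∫⁻ p in U0, g p ∂P ≤ ENNReal.ofReal ((c 0) ^ (-s)) * (μ univ * μ univ) := by
    have hb : ∀ p ∈ U0, g p ≤ ENNReal.ofReal ((c 0) ^ (-s)) := by
      intro p hp
      calc g p ≤ (ENNReal.ofReal (c 0)) ^ (-s) := hanti (le_of_lt hp)
        _ = ENNReal.ofReal ((c 0) ^ (-s)) := ENNReal.ofReal_rpow_of_pos (hcpos _)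
    calc ∫⁻ p in U0, g p ∂P ≤ ∫⁻ _p in U0, ENNReal.ofReal ((c 0) ^ (-s)) ∂P :=
          setLIntegral_mono measurable_const hb
      _ = ENNReal.ofReal ((c 0) ^ (-s)) * P U0 := setLIntegral_const _ _
      _ ≤ ENNReal.ofReal ((c 0) ^ (-s)) * (μ univ * μ univ) := by
          apply mul_le_mul_right
          calc P U0 ≤ P univ := measure_mono (subset_univ _)
            _ = μ univ * μ univ := by rw [hP, ← univ_prod_univ, Measure.prod_prod]
  have hsum : ∑' n, ∫⁻ p in V n, g p ∂P ≤ ENNReal.ofReal K * (1 - ENNReal.ofReal q)⁻¹ := by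
    calc ∑' n, ∫⁻ p in V n, g p ∂P ≤ ∑' n, ENNReal.ofReal K * ENNReal.ofReal q ^ n :=
          ENNReal.tsum_le_tsum hVbound
      _ = ENNReal.ofReal K * ∑' n, ENNReal.ofReal q ^ n := ENNReal.tsum_mul_left
      _ = ENNReal.ofReal K * (1 - ENNReal.ofReal q)⁻¹ := by rw [ENNReal.tsum_geometric]
  have hchain : energy μ s ≤ 0 + (ENNReal.ofReal ((c 0) ^ (-s)) * (μ univ * μ univ)
      + ENNReal.ofReal K * (1 - ENNReal.ofReal q)⁻¹) := by
    rw [energy_eq_prod, ← setLIntegral_univ]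
    calc ∫⁻ p in univ, g p ∂P ≤ ∫⁻ p in Z ∪ (U0 ∪ ⋃ n, V n), g p ∂P :=
          lintegral_mono_set hcover
      _ ≤ ∫⁻ p in Z, g p ∂P + ∫⁻ p in U0 ∪ ⋃ n, V n, g p ∂P := lintegral_union_le _ _ _
      _ ≤ 0 + (∫⁻ p in U0, g p ∂P + ∫⁻ p in ⋃ n, V n, g p ∂P) := by
          rw [setLIntegral_measure_zero _ _ hZ0]
          exact add_le_add le_rfl (lintegral_union_le _ _ _)
      _ ≤ 0 + (ENNReal.ofReal ((c 0) ^ (-s)) * (μ univ * μ univ)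
            + ENNReal.ofReal K * (1 - ENNReal.ofReal q)⁻¹) := by
          refine add_le_add le_rfl (add_le_add hU0bound ?_)
          exact le_trans (lintegral_iUnion_le _ _) hsum
  refine lt_of_le_of_lt hchain ?_
  rw [zero_add]
  apply ENNReal.add_lt_top.2
  constructor
  · exact ENNReal.mul_lt_top ENNReal.ofReal_lt_top
      (ENNReal.mul_lt_top (measure_lt_top μ _) (measure_lt_top μ _))
  · refine ENNReal.mul_lt_top ENNReal.ofReal_lt_top ?_
    rw [ENNReal.inv_lt_top, tsub_pos_iff_lt]
    exact ENNReal.ofReal_lt_one.2 hq1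

end Aux

theorem corrDim_eq_liminf {X : Type*} [MetricSpace X] [CompactSpace X]
    [MeasurableSpace X] [BorelSpace X]
    (μ : Measure X) [IsFiniteMeasure μ] [μ.Regular] :
    corrDim μ =
      liminf (fun r : ℝ =>
        Real.log (∫⁻ x, μ (closedBall x r) ∂μ).toReal / Real.log r) (𝓝[>] 0) := by
  classical
  set F : ℝ → ℝ := fun r =>
    Real.log (∫⁻ x, μ (closedBall x r) ∂μ).toReal / Real.log r with hF
  rw [corrDim, liminf_eq]
  by_cases hjunk : ∃ r : ℝ, 0 < r ∧ (∫⁻ x, μ (closedBall x r) ∂μ) = 0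
  · obtain ⟨r₁, hr₁, h0⟩ := hjunk
    have hS : {s : ℝ | energy μ s < ⊤} = univ :=
      eq_univ_of_forall fun s => energy_lt_top_of_Ebar_zero μ hr₁ h0 s
    have hF0 : ∀ᶠ r in 𝓝[>] (0:ℝ), F r = 0 := by
      filter_upwards [Ioo_mem_nhdsGT_of_mem (⟨le_refl 0, hr₁⟩ : (0:ℝ) ∈ Ico 0 r₁)] with r hr
      have : (∫⁻ x, μ (closedBall x r) ∂μ) = 0 :=
        le_antisymm (le_trans (Ebar_mono μ hr.2.le) (le_of_eq h0)) zero_le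
      simp [hF, this]
    have hT : {a : ℝ | ∀ᶠ r in 𝓝[>] (0:ℝ), a ≤ F r} = Iic 0 := by
      ext a
      simp only [mem_setOf_eq, mem_Iic]
      constructor
      · intro ha
        obtain ⟨r, hr1, hr2⟩ := (ha.and hF0).exists
        linarith [hr1, le_of_eq hr2]
      · intro ha
        filter_upwards [hF0] with r hr
        rw [hr]; exact ha
    rw [hS, hT, csSup_Iic]
    exact Real.sSup_univ
  · push_neg at hjunk
    have hpos : ∀ r : ℝ, 0 < r → (∫⁻ x, μ (closedBall x r) ∂μ) ≠ 0 := hjunk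
    -- negatives belong to T
    have hneg : ∀ a : ℝ, a < 0 → ∀ᶠ r in 𝓝[>] (0:ℝ), a ≤ F r := by
      intro a ha
      set M : ℝ := (μ univ * μ univ).toReal with hM
      set C : ℝ := Real.log (max 1 M) with hCdef
      have hC0 : 0 ≤ C := Real.log_nonneg (le_max_left _ _)
      have hε : (0:ℝ) < min 1 (Real.exp (C / a)) := lt_min one_pos (Real.exp_pos _)
      filter_upwards [Ioo_mem_nhdsGT_of_mem (⟨le_refl 0, hε⟩ : (0:ℝ) ∈ Ico 0 _)] with r hr
      have hr0 : 0 < r := hr.1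
      have hr1 : r < 1 := lt_of_lt_of_le hr.2 (min_le_left _ _)
      have hrδ : r ≤ Real.exp (C / a) := le_of_lt (lt_of_lt_of_le hr.2 (min_le_right _ _))
      have hlogr : Real.log r < 0 := Real.log_neg hr0 hr1
      rw [hF]
      rw [le_div_iff_of_neg hlogr]
      -- need : log E ≤ a * log r
      have hEt : (∫⁻ x, μ (closedBall x r) ∂μ).toReal ≤ max 1 M := by
        refine le_trans ?_ (le_max_right _ _)
        refine ENNReal.toReal_mono (ENNReal.mul_ne_top (measure_ne_top μ _) (measure_ne_top μ _)) ?_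
        calc (∫⁻ x, μ (closedBall x r) ∂μ) ≤ ∫⁻ _x, μ univ ∂μ :=
              lintegral_mono fun x => measure_mono (subset_univ _)
          _ = μ univ * μ univ := lintegral_const _
      have hlogE : Real.log (∫⁻ x, μ (closedBall x r) ∂μ).toReal ≤ C := by
        rcases eq_or_lt_of_le (ENNReal.toReal_nonneg :
            (0:ℝ) ≤ (∫⁻ x, μ (closedBall x r) ∂μ).toReal) with h | h
        · rw [← h, Real.log_zero]; exact hC0
        · exact (Real.log_le_log_iff h (lt_of_lt_of_le one_pos (le_max_left 1 M))).2 hEt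
      have hE2 : C ≤ a * Real.log r := by
        have h1 : Real.log r ≤ C / a := by
          calc Real.log r ≤ Real.log (Real.exp (C / a)) := by
                rw [Real.log_exp]
                rw [← Real.log_exp (C/a)] at hrδ ⊢
                exact (Real.log_le_log_iff hr0 (Real.exp_pos _)).2 (by rwa [Real.log_exp] at hrδ)
            _ = C / a := Real.log_exp _
        have := mul_le_mul_of_nonpos_left h1 (le_of_lt ha)
        rwa [mul_div_cancel₀ C (ne_of_lt ha)] at this
      linarith
    apply sSup_eq_sSup_of_between
    · exact ⟨0, by simpa using energy_lt_top_of_nonpos μ le_rfl⟩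
    · exact ⟨-1, hneg (-1) (by norm_num)⟩
    · -- energy finite at s implies every a < s is an eventual lower bound
      intro s hs a ha
      rw [mem_Iio] at ha
      simp only [mem_setOf_eq] at hs ⊢
      rcases lt_or_ge a 0 with ha0 | ha0
      · exact hneg a ha0
      have hs0 : 0 ≤ s := le_trans ha0 (le_of_lt ha)
      set I := energy μ s with hI
      have hIt : I ≠ ⊤ := hs.ne
      have hI0 : I ≠ 0 := by
        intro h00
        have := Ebar_le_rpow_mul_energy μ hs0 (one_pos : (0:ℝ) < 1)
        rw [← hI, h00, mul_zero] at this
        exact hpos 1 one_pos (le_antisymm this zero_le)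
      have hItpos : 0 < I.toReal := ENNReal.toReal_pos hI0 hIt
      have has : a - s < 0 := by linarith
      set δ : ℝ := Real.exp (Real.log I.toReal / (a - s)) with hδ
      have hε : (0:ℝ) < min 1 δ := lt_min one_pos (Real.exp_pos _)
      filter_upwards [Ioo_mem_nhdsGT_of_mem (⟨le_refl 0, hε⟩ : (0:ℝ) ∈ Ico 0 _)] with r hr
      have hr0 : 0 < r := hr.1
      have hr1 : r < 1 := lt_of_lt_of_le hr.2 (min_le_left _ _)
      have hrδ : r ≤ δ := le_of_lt (lt_of_lt_of_le hr.2 (min_le_right _ _))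
      have hlogr : Real.log r < 0 := Real.log_neg hr0 hr1
      rw [hF, le_div_iff_of_neg hlogr]
      set Et := (∫⁻ x, μ (closedBall x r) ∂μ).toReal with hEt
      have hEt_pos : 0 < Et := ENNReal.toReal_pos (hpos r hr0) (Ebar_lt_top μ r).ne
      have hEr : (∫⁻ x, μ (closedBall x r) ∂μ) ≤ ENNReal.ofReal (r ^ s) * I :=
        le_trans (Ebar_le_rpow_mul_energy μ hs0 hr0)
          (le_of_eq (by rw [ENNReal.ofReal_rpow_of_pos hr0]))
      have hEt_le : Et ≤ r ^ s * I.toReal := by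
        have := ENNReal.toReal_mono (ENNReal.mul_ne_top ENNReal.ofReal_ne_top hIt) hEr
        rwa [ENNReal.toReal_mul, ENNReal.toReal_ofReal (Real.rpow_nonneg hr0.le s)] at this
      have hlogEt : Real.log Et ≤ s * Real.log r + Real.log I.toReal := by
        calc Real.log Et ≤ Real.log (r ^ s * I.toReal) :=
              (Real.log_le_log_iff hEt_pos
                (mul_pos (Real.rpow_pos_of_pos hr0 s) hItpos)).2 hEt_le
          _ = s * Real.log r + Real.log I.toReal := by
              rw [Real.log_mul (Real.rpow_pos_of_pos hr0 s).ne' hItpos.ne', Real.log_rpow hr0]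
      have hlog2 : Real.log I.toReal ≤ (a - s) * Real.log r := by
        have h1 : Real.log r ≤ Real.log I.toReal / (a - s) := by
          calc Real.log r ≤ Real.log δ := (Real.log_le_log_iff hr0 (Real.exp_pos _)).2 hrδ
            _ = Real.log I.toReal / (a - s) := Real.log_exp _
        have := mul_le_mul_of_nonpos_left h1 (le_of_lt has)
        rwa [mul_div_cancel₀ _ (ne_of_lt has)] at this
      linarith
    · -- eventual lower bound a implies energy finite below a
      intro a haT s hsa
      rw [mem_Iio] at hsa
      simp only [mem_setOf_eq] at haT ⊢
      rcases le_or_gt s 0 with hs0 | hs0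
      · exact energy_lt_top_of_nonpos μ hs0
      obtain ⟨u, hu, hsub⟩ := mem_nhdsGT_iff_exists_Ioo_subset.1 haT
      have hu0 : (0:ℝ) < u := hu
      set r₀ : ℝ := min u 1 with hr₀def
      have hr₀ : 0 < r₀ := lt_min hu0 one_pos
      refine energy_lt_top_of_decay μ hs0 hsa hr₀ ?_
      intro r hr
      have hr0 : 0 < r := hr.1
      have hr1 : r < 1 := lt_of_lt_of_le hr.2 (min_le_right _ _)
      have hru : r < u := lt_of_lt_of_le hr.2 (min_le_left _ _)
      have haF : a ≤ F r := hsub ⟨hr0, hru⟩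
      have hlogr : Real.log r < 0 := Real.log_neg hr0 hr1
      rw [hF, le_div_iff_of_neg hlogr] at haF
      set Et := (∫⁻ x, μ (closedBall x r) ∂μ).toReal with hEt
      have hEt_pos : 0 < Et := ENNReal.toReal_pos (hpos r hr0) (Ebar_lt_top μ r).ne
      have hEt_le : Et ≤ r ^ a := by
        have hlog : Real.log Et ≤ Real.log (r ^ a) := by
          rw [Real.log_rpow hr0]; exact haF
        exact (Real.log_le_log_iff hEt_pos (Real.rpow_pos_of_pos hr0 a)).1 hlog
      rw [← ENNReal.ofReal_toReal (Ebar_lt_top μ r).ne]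
      exact ENNReal.ofReal_le_ofReal hEt_le
end

section
/- For any finite Borel regular measure μ on a compact metric space X and any ε > 0, there exists a compact set A ⊂ X with μ(X \ A) < ε such that the correlation dimension of μ|_A is at least the lower Hausdorff dimension of μ. -/
open MeasureTheory Filter Metric Set Topology
open scoped ENNReal

set_option linter.unusedSectionVars false

section Aux
variable {X : Type*} [MetricSpace X] [SecondCountableTopology X] [MeasurableSpace X] [BorelSpace X]

/-- The "Egorov set" of points whose closed balls of radii `< δ` have mass at most `r ^ s`. -/
def Eset (μ : Measure X) (s δ : ℝ) : Set X :=
  {x | ∀ r : ℝ, 0 < r → r < δ → μ (closedBall x r) ≤ ENNReal.ofReal (r ^ s)}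

lemma measurable_interBall (μ : Measure X) [SFinite μ] {F : Set X} (hF : MeasurableSet F)
    (ρ : ℝ) : Measurable fun x => μ (F ∩ closedBall x ρ) := by
  set S : Set (X × X) := {p : X × X | p.2 ∈ F ∧ p.2 ∈ closedBall p.1 ρ} with hS
  have hSmeas : MeasurableSet S := by
    apply MeasurableSet.inter
    · exact measurable_snd hF
    · have : IsClosed {p : X × X | dist p.2 p.1 ≤ ρ} :=
        isClosed_le (continuous_snd.dist continuous_fst) continuous_const
      exact this.measurableSet
  have key : ∀ x, μ (F ∩ closedBall x ρ) = ∫⁻ y, S.indicator 1 (x, y) ∂μ := by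
    intro x
    have hset : (F ∩ closedBall x ρ) = {y | (x, y) ∈ S} := by
      ext y; simp [hS, mem_closedBall]
    rw [← lintegral_indicator_one (hF.inter measurableSet_closedBall)]
    refine lintegral_congr fun y => ?_
    by_cases hy : (x, y) ∈ S
    · rw [hset, Set.indicator_of_mem (show y ∈ {y | (x,y) ∈ S} from hy),
        Set.indicator_of_mem hy]
      rfl
    · rw [hset, Set.indicator_of_notMem (show y ∉ {y | (x,y) ∈ S} from hy),
        Set.indicator_of_notMem hy]
  have h2 : (fun x => μ (F ∩ closedBall x ρ)) = fun x => ∫⁻ y, S.indicator 1 (x, y) ∂μ :=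
    funext key
  rw [h2]
  exact Measurable.lintegral_prod_right' (measurable_const.indicator hSmeas)

lemma isClosed_Eset (μ : Measure X) [IsFiniteMeasure μ] (s δ : ℝ) : IsClosed (Eset μ s δ) := by
  refine isClosed_of_closure_subset ?_
  intro x hx r hr hrδ
  have key : ∀ η : ℝ, 0 < η → η < δ - r → μ (closedBall x r) ≤ ENNReal.ofReal ((r + η) ^ s) := by
    intro η hη hηδ
    obtain ⟨x', hx'E, hx'd⟩ := Metric.mem_closure_iff.1 hx η hη
    have hsub : closedBall x r ⊆ closedBall x' (r + η) :=
      closedBall_subset_closedBall' (by linarith [hx'd.le])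
    exact (measure_mono hsub).trans (hx'E (r + η) (by linarith) (by linarith))
  have htend : Tendsto (fun η : ℝ => ENNReal.ofReal ((r + η) ^ s)) (𝓝[>] 0)
      (𝓝 (ENNReal.ofReal (r ^ s))) := by
    apply Tendsto.mono_left _ nhdsWithin_le_nhds
    have h1 : ContinuousAt (fun η : ℝ => ENNReal.ofReal ((r + η) ^ s)) 0 := by
      apply ENNReal.continuous_ofReal.continuousAt.comp
      apply ContinuousAt.rpow_const
      · exact (continuous_const.add continuous_id).continuousAt
      · left; simpa using hr.ne'
    simpa using h1.tendsto
  refine ge_of_tendsto htend ?_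
  filter_upwards [Ioo_mem_nhdsGT_of_mem (show (0:ℝ) ∈ Ico 0 (δ - r) from ⟨le_refl _, by linarith⟩)]
    with η hη
  exact key η hη.1 hη.2

lemma measure_closedBall_le_potential (ν : Measure X) {t u : ℝ} (ht : 0 < t) (hu : 0 < u)
    (x : X) : ν (closedBall x u) ≤ ENNReal.ofReal (u ^ t) * potential ν t x := by
  have hut0 : ENNReal.ofReal (u ^ t) ≠ 0 := by
    exact (ENNReal.ofReal_pos.2 (Real.rpow_pos_of_pos hu t)).ne'
  have hc1 : ENNReal.ofReal (u ^ t) * (ENNReal.ofReal (u ^ t))⁻¹ = 1 :=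
    ENNReal.mul_inv_cancel hut0 ENNReal.ofReal_ne_top
  have h1 : (ENNReal.ofReal (u ^ t))⁻¹ * ν (closedBall x u) ≤ potential ν t x := by
    rw [← setLIntegral_const (closedBall x u) _]
    refine le_trans (setLIntegral_mono' measurableSet_closedBall ?_)
      (setLIntegral_le_lintegral _ _)
    intro y hy
    rw [ENNReal.rpow_neg]
    rw [← ENNReal.ofReal_rpow_of_pos hu]
    refine ENNReal.inv_le_inv.2 (ENNReal.rpow_le_rpow ?_ ht.le)
    rw [edist_dist]
    exact ENNReal.ofReal_le_ofReal (by rw [mem_closedBall] at hy; rw [dist_comm]; exact hy)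
  calc ν (closedBall x u) = 1 * ν (closedBall x u) := (one_mul _).symm
    _ = ENNReal.ofReal (u ^ t) * ((ENNReal.ofReal (u ^ t))⁻¹ * ν (closedBall x u)) := by
        rw [← mul_assoc, hc1]
    _ ≤ ENNReal.ofReal (u ^ t) * potential ν t x := mul_le_mul_right h1 _

section LiminfFacts
variable (μ : Measure X) [IsFiniteMeasure μ]

/-- The set whose `sSup` is the liminf defining `lowerLocalDim`. -/
def TTset (x : X) : Set ℝ :=
  {β : ℝ | ∀ᶠ r in 𝓝[>] (0:ℝ), β ≤ Real.log (μ (closedBall x r)).toReal / Real.log r}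

lemma lowerLocalDim_eq_sSup (x : X) : lowerLocalDim μ x = sSup (TTset μ x) :=
  liminf_eq

lemma TT_facts {x : X} {a : ℝ} (ha : 0 < a) (haL : a ≤ lowerLocalDim μ x) :
    (TTset μ x).Nonempty ∧ BddAbove (TTset μ x) := by
  rw [lowerLocalDim_eq_sSup] at haL
  constructor
  · by_contra h
    rw [Set.not_nonempty_iff_eq_empty] at h
    rw [h, Real.sSup_empty] at haL
    linarith
  · by_contra h
    rw [Real.sSup_of_not_bddAbove h] at haL
    linarith

lemma ball_pos {x : X} {a : ℝ} (ha : 0 < a) (haL : a ≤ lowerLocalDim μ x) :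
    ∀ r : ℝ, 0 < r → μ (closedBall x r) ≠ 0 := by
  intro r hr h0
  obtain ⟨hne, hbdd⟩ := TT_facts μ ha haL
  have h1 : ∀ᶠ q in 𝓝[>] (0:ℝ),
      Real.log (μ (closedBall x q)).toReal / Real.log q = 0 := by
    filter_upwards [Ioo_mem_nhdsGT_of_mem (show (0:ℝ) ∈ Ico 0 r from ⟨le_refl _, hr⟩)] with q hq
    have : μ (closedBall x q) = 0 :=
      measure_mono_null (closedBall_subset_closedBall hq.2.le) h0
    simp [this]
  have h2 : lowerLocalDim μ x ≤ 0 := by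
    rw [lowerLocalDim_eq_sSup]
    refine csSup_le hne fun β hβ => ?_
    have hβ' : ∀ᶠ q in 𝓝[>] (0:ℝ),
        β ≤ Real.log (μ (closedBall x q)).toReal / Real.log q := hβ
    obtain ⟨q, hq1, hq2⟩ := (hβ'.and h1).exists
    rw [hq2] at hq1
    exact hq1
  linarith

lemma eventually_ball_le {x : X} {a s : ℝ} (haL : a ≤ lowerLocalDim μ x)
    (hs0 : 0 < s) (hsa : s < a) :
    ∀ᶠ r in 𝓝[>] (0:ℝ), μ (closedBall x r) ≤ ENNReal.ofReal (r ^ s) := by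
  have ha : 0 < a := lt_trans hs0 hsa
  obtain ⟨hne, hbdd⟩ := TT_facts μ ha haL
  have hlt : s < sSup (TTset μ x) := by
    rw [lowerLocalDim_eq_sSup] at haL; linarith
  obtain ⟨β, hβTT, hsβ⟩ := exists_lt_of_lt_csSup hne hlt
  filter_upwards [hβTT,
    Ioo_mem_nhdsGT_of_mem (show (0:ℝ) ∈ Ico 0 1 from ⟨le_refl _, one_pos⟩)] with r h1 h2
  have hm0 : μ (closedBall x r) ≠ 0 := ball_pos μ ha haL r h2.1
  have hmtop : μ (closedBall x r) ≠ ⊤ := measure_ne_top μ _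
  have hmpos : 0 < (μ (closedBall x r)).toReal := ENNReal.toReal_pos hm0 hmtop
  have hlogr : Real.log r < 0 := Real.log_neg h2.1 h2.2
  have h3 : Real.log (μ (closedBall x r)).toReal ≤ β * Real.log r :=
    (le_div_iff_of_neg hlogr).1 h1
  have h4 : β * Real.log r ≤ s * Real.log r := by nlinarith
  have h5 : Real.log (μ (closedBall x r)).toReal ≤ Real.log (r ^ s) := by
    rw [Real.log_rpow h2.1]; linarith
  have hrs : (μ (closedBall x r)).toReal ≤ r ^ s :=
    (Real.log_le_log_iff hmpos (Real.rpow_pos_of_pos h2.1 s)).1 h5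
  exact (ENNReal.le_ofReal_iff_toReal_le hmtop (Real.rpow_pos_of_pos h2.1 s).le).2 hrs

/-- Points with frequent dyadic lower bounds on ball masses (exponent `b`). -/
def Gset (b : ℕ) : Set X :=
  {x | ∀ N : ℕ, ∃ k, N ≤ k ∧
    ENNReal.ofReal (((1/2:ℝ) ^ (k+1)) ^ b) ≤ μ (closedBall x ((1/2:ℝ) ^ k))}

lemma measurableSet_Gset [SFinite μ] (b : ℕ) : MeasurableSet (Gset μ b) := by
  have heq : Gset μ b = ⋂ N : ℕ, ⋃ k : ℕ, ⋃ (_ : N ≤ k),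
      {x | ENNReal.ofReal (((1/2:ℝ) ^ (k+1)) ^ b) ≤ μ (closedBall x ((1/2:ℝ) ^ k))} := by
    ext x; simp [Gset]
  rw [heq]
  refine MeasurableSet.iInter fun N => MeasurableSet.iUnion fun k =>
    MeasurableSet.iUnion fun _ => ?_
  have hmeas := measurable_interBall μ MeasurableSet.univ ((1/2:ℝ) ^ k)
  simp only [Set.univ_inter] at hmeas
  exact measurableSet_le measurable_const hmeas

lemma exists_Gb {x : X} {a : ℝ} (ha : 0 < a) (haL : a ≤ lowerLocalDim μ x) :
    ∃ b : ℕ, x ∈ Gset μ b := by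
  obtain ⟨hne, hbdd⟩ := TT_facts μ ha haL
  set L := lowerLocalDim μ x with hL
  have hfreq : ∃ᶠ r in 𝓝[>] (0:ℝ),
      Real.log (μ (closedBall x r)).toReal / Real.log r ≤ L + 1 := by
    by_contra h
    rw [Filter.not_frequently] at h
    have hmem : L + 1 ∈ TTset μ x := by
      filter_upwards [h] with r hr
      exact (not_le.1 hr).le
    have : L + 1 ≤ sSup (TTset μ x) := le_csSup hbdd hmem
    rw [← lowerLocalDim_eq_sSup] at this
    linarith
  refine ⟨⌈L+1⌉₊, fun N => ?_⟩
  have hev : ∀ᶠ r in 𝓝[>] (0:ℝ), 0 < r ∧ r < (1/2:ℝ) ^ (N+1) ∧ r < 1 := by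
    filter_upwards [Ioo_mem_nhdsGT_of_mem
      (show (0:ℝ) ∈ Ico 0 (min ((1/2:ℝ) ^ (N+1)) 1) from
        ⟨le_refl _, lt_min (by positivity) one_pos⟩)] with r hr
    exact ⟨hr.1, lt_of_lt_of_le hr.2 (min_le_left _ _), lt_of_lt_of_le hr.2 (min_le_right _ _)⟩
  obtain ⟨r, hr1, hr0, hrN, hr1'⟩ := (hfreq.and_eventually hev).exists
  have hm0 : μ (closedBall x r) ≠ 0 := ball_pos μ ha haL r hr0
  have hmtop : μ (closedBall x r) ≠ ⊤ := measure_ne_top μ _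
  have hmpos : 0 < (μ (closedBall x r)).toReal := ENNReal.toReal_pos hm0 hmtop
  have hlogr : Real.log r < 0 := Real.log_neg hr0 hr1'
  have h3 : (L + 1) * Real.log r ≤ Real.log (μ (closedBall x r)).toReal :=
    (div_le_iff_of_neg hlogr).1 hr1
  have h5 : Real.log (r ^ (L+1)) ≤ Real.log (μ (closedBall x r)).toReal := by
    rw [Real.log_rpow hr0]; linarith
  have hrL : r ^ (L+1) ≤ (μ (closedBall x r)).toReal :=
    (Real.log_le_log_iff (Real.rpow_pos_of_pos hr0 _) hmpos).1 h5
  have hb : L + 1 ≤ (⌈L+1⌉₊ : ℝ) := Nat.le_ceil _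
  have hrb : r ^ ((⌈L+1⌉₊ : ℕ) : ℝ) ≤ r ^ (L+1) :=
    Real.rpow_le_rpow_of_exponent_ge hr0 hr1'.le hb
  rw [Real.rpow_natCast] at hrb
  -- find dyadic k
  have h1r : 1 ≤ 1/r := by
    rw [le_div_iff₀ hr0]; linarith
  obtain ⟨k, hk1, hk2⟩ := exists_nat_pow_near h1r one_lt_two
  have h2kpos : (0:ℝ) < 2 ^ k := by positivity
  have h2k1pos : (0:ℝ) < 2 ^ (k+1) := by positivity
  have hrk : r ≤ (1/2:ℝ) ^ k := by
    rw [le_div_iff₀ hr0] at hk1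
    rw [one_div_pow, le_div_iff₀ h2kpos]
    nlinarith
  have hrk1 : (1/2:ℝ) ^ (k+1) < r := by
    rw [div_lt_iff₀ hr0] at hk2
    rw [one_div_pow, div_lt_iff₀ h2k1pos]
    nlinarith
  refine ⟨k, ?_, ?_⟩
  · -- N ≤ k
    have : (1/2:ℝ) ^ (k+1) < (1/2:ℝ) ^ (N+1) := lt_trans hrk1 hrN
    have := (pow_lt_pow_iff_right_of_lt_one₀ (by norm_num : (0:ℝ) < 1/2)
      (by norm_num : (1/2:ℝ) < 1)).1 this
    omega
  · have hpow : ((1/2:ℝ) ^ (k+1)) ^ (⌈L+1⌉₊) ≤ r ^ (⌈L+1⌉₊) :=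
      pow_le_pow_left₀ (by positivity) hrk1.le _
    calc ENNReal.ofReal (((1/2:ℝ) ^ (k+1)) ^ (⌈L+1⌉₊))
        ≤ ENNReal.ofReal ((μ (closedBall x r)).toReal) :=
          ENNReal.ofReal_le_ofReal (le_trans hpow (le_trans hrb hrL))
      _ = μ (closedBall x r) := ENNReal.ofReal_toReal hmtop
      _ ≤ μ (closedBall x ((1/2:ℝ) ^ k)) := measure_mono (closedBall_subset_closedBall hrk)

end LiminfFacts
section RealAlgebra

lemma half_pow_eq (m : ℕ) : ((1/2:ℝ) ^ m) = (2:ℝ) ^ (-(m:ℝ)) := by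
  rw [one_div, ← Real.rpow_natCast (2:ℝ)⁻¹ m, ← Real.rpow_neg_one (2:ℝ),
    ← Real.rpow_mul (by norm_num : (0:ℝ) ≤ 2)]
  norm_num

lemma half_pow_rpow (m : ℕ) (u : ℝ) : (((1/2:ℝ) ^ m)) ^ u = (2:ℝ) ^ (-(m:ℝ) * u) := by
  rw [half_pow_eq, ← Real.rpow_mul (by norm_num : (0:ℝ) ≤ 2)]

lemma two_rpow_pow (v : ℝ) (m : ℕ) : (((2:ℝ) ^ v)) ^ m = (2:ℝ) ^ (v * m) := by
  rw [← Real.rpow_natCast ((2:ℝ) ^ v) m, ← Real.rpow_mul (by norm_num : (0:ℝ) ≤ 2)]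

end RealAlgebra

section EnergyFinite
variable {X : Type*} [MetricSpace X] [SecondCountableTopology X]
  [MeasurableSpace X] [BorelSpace X]

lemma energy_restrict_lt_top (μ : Measure X) [IsFiniteMeasure μ] {A : Set X} {s δ t : ℝ}
    (hA : MeasurableSet A) (hsub : A ⊆ Eset μ s δ) (hδ : 0 < δ) (ht : 0 < t) (hts : t < s) :
    energy (μ.restrict A) t < ⊤ := by
  obtain ⟨K₀, hK₀⟩ : ∃ K₀ : ℕ, (1/2:ℝ) ^ K₀ < δ :=
    exists_pow_lt_of_lt_one hδ (by norm_num)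
  set c : ℕ → ℝ≥0∞ := fun k => (ENNReal.ofReal ((1/2:ℝ) ^ (k+1)) ^ t)⁻¹ with hc
  have hck : ∀ k : ℕ, c k = ENNReal.ofReal ((2:ℝ) ^ (((k:ℝ)+1) * t)) := by
    intro k
    show (ENNReal.ofReal ((1/2:ℝ) ^ (k+1)) ^ t)⁻¹ = _
    rw [ENNReal.ofReal_rpow_of_pos (by positivity)]
    rw [← ENNReal.ofReal_inv_of_pos (by positivity)]
    congr 1
    rw [half_pow_rpow, ← Real.rpow_neg (by norm_num : (0:ℝ) ≤ 2)]
    congr 1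
    push_cast
    ring
  have hcne : ∀ k : ℕ, c k ≠ ⊤ := by
    intro k
    rw [hck]
    exact ENNReal.ofReal_ne_top
  have hc1 : ∀ k : ℕ, (1:ℝ≥0∞) ≤ c k := by
    intro k
    rw [hck]
    rw [show (1:ℝ≥0∞) = ENNReal.ofReal 1 by simp]
    exact ENNReal.ofReal_le_ofReal (Real.one_le_rpow one_le_two (by positivity))
  -- pointwise kernel bound
  have hpoint : ∀ x y : X, edist x y ^ (-t) ≤
      1 + ∑' k : ℕ, c k * (closedBall x ((1/2:ℝ) ^ k)).indicator 1 y := by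
    intro x y
    rcases eq_or_lt_of_le (dist_nonneg (x := x) (y := y)) with hd0 | hdpos
    · -- dist = 0
      have he : edist x y = 0 := by
        rw [edist_dist, ← hd0]; simp
      rw [he, ENNReal.zero_rpow_of_neg (neg_lt_zero.2 ht)]
      have hge : ∀ k : ℕ, (1:ℝ≥0∞) ≤ c k * (closedBall x ((1/2:ℝ) ^ k)).indicator 1 y := by
        intro k
        have hy : y ∈ closedBall x ((1/2:ℝ) ^ k) := by
          rw [mem_closedBall, dist_comm, ← hd0]; positivity
        rw [Set.indicator_of_mem hy, Pi.one_apply, mul_one]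
        exact hc1 k
      have h1top : (∑' _ : ℕ, (1:ℝ≥0∞)) = ⊤ :=
        ENNReal.tsum_const_eq_top_of_ne_zero one_ne_zero
      have htop : (⊤:ℝ≥0∞) ≤ ∑' k : ℕ, c k * (closedBall x ((1/2:ℝ) ^ k)).indicator 1 y := by
        rw [← h1top]
        exact Summable.tsum_le_tsum hge ENNReal.summable ENNReal.summable
      exact le_add_left htop
    · by_cases hd1 : 1 ≤ dist x y
      · have h1 : edist x y ^ (-t) ≤ 1 := by
          apply ENNReal.rpow_le_one_of_one_le_of_neg
          · rw [edist_dist, show (1:ℝ≥0∞) = ENNReal.ofReal 1 by simp]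
            exact ENNReal.ofReal_le_ofReal hd1
          · exact neg_lt_zero.2 ht
        exact le_trans h1 le_self_add
      · push_neg at hd1
        have h1r : 1 ≤ 1 / dist x y := by
          rw [le_div_iff₀ hdpos]; linarith
        obtain ⟨k, hk1, hk2⟩ := exists_nat_pow_near h1r one_lt_two
        have h2kpos : (0:ℝ) < 2 ^ k := by positivity
        have h2k1pos : (0:ℝ) < 2 ^ (k+1) := by positivity
        have hrk : dist x y ≤ (1/2:ℝ) ^ k := by
          rw [le_div_iff₀ hdpos] at hk1
          rw [one_div_pow, le_div_iff₀ h2kpos]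
          nlinarith
        have hrk1 : (1/2:ℝ) ^ (k+1) ≤ dist x y := by
          rw [div_lt_iff₀ hdpos] at hk2
          rw [one_div_pow, div_le_iff₀ h2k1pos]
          nlinarith
        have hyk : y ∈ closedBall x ((1/2:ℝ) ^ k) := by
          rw [mem_closedBall, dist_comm]; exact hrk
        have hLHS : edist x y ^ (-t) ≤ c k := by
          rw [edist_dist, ENNReal.rpow_neg, hc]
          exact ENNReal.inv_le_inv.2
            (ENNReal.rpow_le_rpow (ENNReal.ofReal_le_ofReal hrk1) ht.le)
        refine le_trans hLHS (le_trans ?_ le_add_self)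
        calc c k = c k * (closedBall x ((1/2:ℝ) ^ k)).indicator 1 y := by
              rw [Set.indicator_of_mem hyk, Pi.one_apply, mul_one]
          _ ≤ ∑' j : ℕ, c j * (closedBall x ((1/2:ℝ) ^ j)).indicator 1 y := ENNReal.le_tsum k
  -- the uniform bound for the inner integral
  set q : ℝ := (2:ℝ) ^ (t - s) with hq
  have hq0 : 0 ≤ q := by positivity
  have hq1 : q < 1 := Real.rpow_lt_one_of_one_lt_of_neg one_lt_two (by linarith)
  set CB : ℝ≥0∞ := μ Set.univ + ((∑ k ∈ Finset.range K₀, c k) * μ Set.univ +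
    ENNReal.ofReal ((2:ℝ) ^ t) * (1 - ENNReal.ofReal q)⁻¹) with hCB
  have hCBne : CB ≠ ⊤ := by
    rw [hCB]
    refine ENNReal.add_ne_top.2 ⟨measure_ne_top μ _, ENNReal.add_ne_top.2 ⟨?_, ?_⟩⟩
    · exact ENNReal.mul_ne_top (ENNReal.sum_lt_top.2 fun k _ => (hcne k).lt_top).ne
        (measure_ne_top μ _)
    · refine ENNReal.mul_ne_top ENNReal.ofReal_ne_top (ENNReal.inv_ne_top.2 ?_)
      rw [Ne, tsub_eq_zero_iff_le]
      exact not_le.2 (ENNReal.ofReal_lt_one.2 hq1)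
  have hIbound : ∀ x ∈ A, (∫⁻ y, edist x y ^ (-t) ∂(μ.restrict A)) ≤ CB := by
    intro x hx
    have step1 : (∫⁻ y, edist x y ^ (-t) ∂(μ.restrict A)) ≤
        ∫⁻ y, (1 + ∑' k : ℕ, c k * (closedBall x ((1/2:ℝ) ^ k)).indicator 1 y)
          ∂(μ.restrict A) :=
      lintegral_mono fun y => hpoint x y
    have step2 : (∫⁻ y, (1 + ∑' k : ℕ, c k * (closedBall x ((1/2:ℝ) ^ k)).indicator 1 y)
        ∂(μ.restrict A)) = μ A +
        ∑' k : ℕ, c k * μ (closedBall x ((1/2:ℝ) ^ k) ∩ A) := by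
      rw [lintegral_add_left measurable_const]
      congr 1
      · rw [lintegral_one, Measure.restrict_apply_univ]
      · rw [lintegral_tsum]
        · congr 1
          funext k
          rw [lintegral_const_mul _ (measurable_one.indicator measurableSet_closedBall)]
          congr 1
          rw [lintegral_indicator_one measurableSet_closedBall,
            Measure.restrict_apply measurableSet_closedBall]
        · intro k
          exact ((measurable_one.indicator measurableSet_closedBall).const_mul _).aemeasurable
    have step3 : ∑' k : ℕ, c k * μ (closedBall x ((1/2:ℝ) ^ k) ∩ A) ≤
        (∑ k ∈ Finset.range K₀, c k) * μ Set.univ +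
          ENNReal.ofReal ((2:ℝ) ^ t) * (1 - ENNReal.ofReal q)⁻¹ := by
      have htermwise : ∀ k : ℕ, c k * μ (closedBall x ((1/2:ℝ) ^ k) ∩ A) ≤
          (if k < K₀ then c k * μ Set.univ else 0) +
            ENNReal.ofReal ((2:ℝ) ^ t) * ENNReal.ofReal q ^ k := by
        intro k
        by_cases hk : k < K₀
        · rw [if_pos hk]
          exact le_add_right (mul_le_mul_right (measure_mono (Set.subset_univ _)) _)
        · rw [if_neg hk, zero_add]
          push_neg at hk
          have hρpos : (0:ℝ) < (1/2:ℝ) ^ k := by positivity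
          have hρδ : (1/2:ℝ) ^ k < δ :=
            lt_of_le_of_lt (pow_le_pow_of_le_one (by norm_num) (by norm_num) hk) hK₀
          have hball : μ (closedBall x ((1/2:ℝ) ^ k) ∩ A) ≤
              ENNReal.ofReal (((1/2:ℝ) ^ k) ^ s) :=
            le_trans (measure_mono Set.inter_subset_left) (hsub hx _ hρpos hρδ)
          calc c k * μ (closedBall x ((1/2:ℝ) ^ k) ∩ A) ≤
              c k * ENNReal.ofReal (((1/2:ℝ) ^ k) ^ s) := mul_le_mul_right hball _
            _ = ENNReal.ofReal ((2:ℝ) ^ t) * ENNReal.ofReal q ^ k := by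
              rw [hck, ← ENNReal.ofReal_pow hq0, ← ENNReal.ofReal_mul (by positivity)]
              congr 1
              rw [half_pow_rpow, hq, two_rpow_pow,
                ← Real.rpow_add (by norm_num : (0:ℝ) < 2)]
              rw [← ENNReal.ofReal_mul (by positivity),
                ← Real.rpow_add (by norm_num : (0:ℝ) < 2)]
              congr 1
              push_cast
              ring
      calc ∑' k : ℕ, c k * μ (closedBall x ((1/2:ℝ) ^ k) ∩ A) ≤
          ∑' k : ℕ, ((if k < K₀ then c k * μ Set.univ else 0) +
            ENNReal.ofReal ((2:ℝ) ^ t) * ENNReal.ofReal q ^ k) :=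
            Summable.tsum_le_tsum htermwise ENNReal.summable ENNReal.summable
        _ = (∑' k : ℕ, (if k < K₀ then c k * μ Set.univ else 0)) +
            ∑' k : ℕ, ENNReal.ofReal ((2:ℝ) ^ t) * ENNReal.ofReal q ^ k :=
            ENNReal.tsum_add
        _ ≤ (∑ k ∈ Finset.range K₀, c k) * μ Set.univ +
            ENNReal.ofReal ((2:ℝ) ^ t) * (1 - ENNReal.ofReal q)⁻¹ := by
            gcongr
            · rw [tsum_eq_sum (s := Finset.range K₀) (fun k hk => by
                rw [if_neg (by simpa using hk)])]
              rw [Finset.sum_mul]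
              refine Finset.sum_le_sum fun k hk => ?_
              rw [if_pos (Finset.mem_range.1 hk)]
            · rw [ENNReal.tsum_mul_left, ENNReal.tsum_geometric]
    calc (∫⁻ y, edist x y ^ (-t) ∂(μ.restrict A)) ≤ _ := step1
      _ = _ := step2
      _ ≤ CB := by
        rw [hCB]
        exact add_le_add (measure_mono (Set.subset_univ _)) step3
  -- conclude
  have : energy (μ.restrict A) t ≤ CB * μ A := by
    rw [energy]
    calc ∫⁻ x, ∫⁻ y, edist x y ^ (-t) ∂(μ.restrict A) ∂(μ.restrict A) ≤
        ∫⁻ _, CB ∂(μ.restrict A) := by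
          refine lintegral_mono_ae ((ae_restrict_iff' hA).2 (ae_of_all _ ?_))
          exact hIbound
      _ = CB * μ A := by rw [lintegral_const, Measure.restrict_apply_univ]
  exact lt_of_le_of_lt this (ENNReal.mul_lt_top hCBne.lt_top (measure_lt_top μ A))

end EnergyFinite
section BddAboveSec
variable {X : Type*} [MetricSpace X] [SecondCountableTopology X]
  [MeasurableSpace X] [BorelSpace X]

lemma collect5 (c p q r s w : ℝ) (h : p = q + r + s + w) :
    c * (2:ℝ)^p = c * (2:ℝ)^q * (2:ℝ)^r * ((2:ℝ)^s * (2:ℝ)^w) := by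
  subst h
  rw [Real.rpow_add (by norm_num : (0:ℝ)<2), Real.rpow_add (by norm_num : (0:ℝ)<2),
    Real.rpow_add (by norm_num : (0:ℝ)<2)]
  ring

lemma potential_measurable (ν : Measure X) [SFinite ν] (t : ℝ) :
    Measurable (potential ν t) := by
  have h : Measurable fun x : X =>
      ∫⁻ y, (fun p : X × X => edist p.1 p.2 ^ (-t)) (x, y) ∂ν :=
    Measurable.lintegral_prod_right'
      ((ENNReal.continuous_rpow_const.comp continuous_edist).measurable)
  exact h

lemma bddAbove_energySet (μ : Measure X) [IsFiniteMeasure μ] {A : Set X}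
    (hA : MeasurableSet A) (b : ℕ) (hGb : 0 < μ (A ∩ Gset μ b)) :
    BddAbove {t : ℝ | energy (μ.restrict A) t < ⊤} := by
  by_contra hbdd
  obtain ⟨t, htS, htb⟩ := not_bddAbove_iff.1 hbdd (max (b:ℝ) 0)
  have ht0 : 0 < t := lt_of_le_of_lt (le_max_right _ _) htb
  have htb' : (b:ℝ) < t := lt_of_le_of_lt (le_max_left _ _) htb
  set ν := μ.restrict A with hν
  have hpotmeas : Measurable (potential ν t) := potential_measurable ν t
  have henergy : ∫⁻ x, potential ν t x ∂ν ≠ ⊤ := htS.ne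
  have hae : ∀ᵐ x ∂ν, potential ν t x < ⊤ := ae_lt_top hpotmeas henergy
  have hinftymeas : MeasurableSet {x | potential ν t x = ⊤} :=
    hpotmeas (measurableSet_singleton ⊤)
  have hinfty : μ (A ∩ {x | potential ν t x = ⊤}) = 0 := by
    have h1 : ν {x | potential ν t x = ⊤} = 0 := by
      rw [← nonpos_iff_eq_zero]
      refine le_trans (measure_mono ?_) (le_of_eq (ae_iff.1 hae))
      intro z hz
      simp only [Set.mem_setOf_eq, not_lt, top_le_iff]
      exact hz
    rw [hν, Measure.restrict_apply hinftymeas, Set.inter_comm] at h1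
    exact h1
  -- choose C
  obtain ⟨C, hC⟩ : ∃ C : ℕ, μ (A ∩ {x | (C:ℝ≥0∞) < potential ν t x}) < μ (A ∩ Gset μ b) := by
    have hanti : Antitone fun C : ℕ => A ∩ {x | (C:ℝ≥0∞) < potential ν t x} := by
      intro m n hmn
      refine Set.inter_subset_inter_right _ fun z hz => ?_
      simp only [Set.mem_setOf_eq] at hz ⊢
      exact lt_of_le_of_lt (by exact_mod_cast Nat.cast_le.2 hmn) hz
    have hiInter : (⋂ C : ℕ, A ∩ {x | (C:ℝ≥0∞) < potential ν t x}) =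
        A ∩ {x | potential ν t x = ⊤} := by
      ext z
      simp only [Set.mem_iInter, Set.mem_inter_iff, Set.mem_setOf_eq]
      constructor
      · rintro h
        refine ⟨(h 0).1, ?_⟩
        by_contra hne
        obtain ⟨n, hn⟩ := ENNReal.exists_nat_gt hne
        exact absurd (h n).2 (not_lt.2 hn.le)
      · rintro ⟨hzA, hztop⟩ C
        exact ⟨hzA, by rw [hztop]; exact ENNReal.natCast_lt_top C⟩
    have htendsto := tendsto_measure_iInter_atTop
      (fun C : ℕ => (hA.inter (measurableSet_lt measurable_const hpotmeas)).nullMeasurableSet)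
      hanti ⟨0, measure_ne_top μ _⟩
    rw [hiInter, hinfty] at htendsto
    have := htendsto.eventually (gt_mem_nhds hGb)
    exact this.exists
  set A₁ := A ∩ {x | potential ν t x ≤ (C:ℝ≥0∞)} with hA₁def
  have hA₁ : MeasurableSet A₁ := hA.inter (measurableSet_le hpotmeas measurable_const)
  have hA₁A : A₁ ⊆ A := Set.inter_subset_left
  have hQpos : 0 < μ (A ∩ Gset μ b ∩ A₁) := by
    by_contra h0
    push_neg at h0
    rw [nonpos_iff_eq_zero] at h0
    have hsplit : μ (A ∩ Gset μ b) ≤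
        μ (A ∩ Gset μ b ∩ A₁) + μ (A ∩ {x | (C:ℝ≥0∞) < potential ν t x}) := by
      refine le_trans (measure_mono ?_) (measure_union_le _ _)
      intro z hz
      by_cases hp : potential ν t z ≤ (C:ℝ≥0∞)
      · exact Or.inl ⟨hz, hz.1, hp⟩
      · exact Or.inr ⟨hz.1, not_le.1 hp⟩
    rw [h0, zero_add] at hsplit
    exact absurd (lt_of_le_of_lt hsplit hC) (lt_irrefl _)
  -- uniform ball bound
  have hball : ∀ (y : X) (ρ : ℝ), 0 < ρ →
      μ (A₁ ∩ closedBall y ρ) ≤ (C:ℝ≥0∞) * ENNReal.ofReal ((2*ρ) ^ t) := by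
    intro y ρ hρ
    rcases Set.eq_empty_or_nonempty (A₁ ∩ closedBall y ρ) with he | ⟨x', hx'⟩
    · rw [he]; simp
    · have hsub2 : A₁ ∩ closedBall y ρ ⊆ closedBall x' (2*ρ) ∩ A := by
        rintro z ⟨hz1, hz2⟩
        refine ⟨?_, hz1.1⟩
        rw [mem_closedBall] at hz2 ⊢
        have hd1 : dist x' y ≤ ρ := mem_closedBall.1 hx'.2
        calc dist z x' ≤ dist z y + dist y x' := dist_triangle _ _ _
          _ ≤ ρ + ρ := add_le_add hz2 (by rwa [dist_comm])
          _ = 2*ρ := by ring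
      calc μ (A₁ ∩ closedBall y ρ) ≤ μ (closedBall x' (2*ρ) ∩ A) := measure_mono hsub2
        _ = ν (closedBall x' (2*ρ)) := (Measure.restrict_apply measurableSet_closedBall).symm
        _ ≤ ENNReal.ofReal ((2*ρ) ^ t) * potential ν t x' :=
            measure_closedBall_le_potential ν ht0 (by positivity) x'
        _ ≤ ENNReal.ofReal ((2*ρ) ^ t) * (C:ℝ≥0∞) := mul_le_mul_right hx'.1.2 _
        _ = (C:ℝ≥0∞) * ENNReal.ofReal ((2*ρ) ^ t) := mul_comm _ _
  -- W sets
  set θ : ℕ → ℝ≥0∞ := fun k => ENNReal.ofReal (((1/2:ℝ) ^ (k+1)) ^ b / 2) with hθ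
  have hθ0 : ∀ k, θ k ≠ 0 := by
    intro k
    rw [hθ]
    exact (ENNReal.ofReal_pos.2 (by positivity)).ne'
  have hθtop : ∀ k, θ k ≠ ⊤ := fun k => ENNReal.ofReal_ne_top
  set W : ℕ → Set X := fun k =>
    A₁ ∩ {x | θ k ≤ μ (closedBall x ((1/2:ℝ) ^ k) \ A₁)} with hW
  have hdiffmeas : ∀ k : ℕ, Measurable fun x => μ (closedBall x ((1/2:ℝ) ^ k) \ A₁) := by
    intro k
    have heq : (fun x => μ (closedBall x ((1/2:ℝ) ^ k) \ A₁)) =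
        fun x => μ (A₁ᶜ ∩ closedBall x ((1/2:ℝ) ^ k)) := by
      funext x
      rw [Set.diff_eq, Set.inter_comm]
    rw [heq]
    exact measurable_interBall μ hA₁.compl _
  have hWmeas : ∀ k, MeasurableSet (W k) := fun k =>
    hA₁.inter (measurableSet_le measurable_const (hdiffmeas k))
  -- J bound via Fubini
  have hJ : ∀ k : ℕ, θ k * μ (W k) ≤
      μ Set.univ * ((C:ℝ≥0∞) * ENNReal.ofReal ((2 * (1/2:ℝ) ^ k) ^ t)) := by
    intro k
    set ρk := (1/2:ℝ) ^ k with hρk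
    have hρkpos : (0:ℝ) < ρk := by positivity
    set S : Set (X × X) := {p : X × X | p.2 ∈ A₁ᶜ ∧ p.2 ∈ closedBall p.1 ρk} with hS
    have hSmeas : MeasurableSet S := by
      apply MeasurableSet.inter
      · exact measurable_snd hA₁.compl
      · exact (isClosed_le (continuous_snd.dist continuous_fst) continuous_const).measurableSet
    have hkey : ∀ x, μ (closedBall x ρk \ A₁) = ∫⁻ y, S.indicator 1 (x, y) ∂μ := by
      intro x
      have hseteq : closedBall x ρk \ A₁ = {y | (x, y) ∈ S} := by
        ext y
        simp only [hS, Set.mem_diff, Set.mem_setOf_eq, Set.mem_compl_iff, mem_closedBall]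
        tauto
      rw [← lintegral_indicator_one ((measurableSet_closedBall).diff hA₁)]
      refine lintegral_congr fun y => ?_
      by_cases hy : (x, y) ∈ S
      · rw [hseteq, Set.indicator_of_mem (show y ∈ {y | (x,y) ∈ S} from hy),
          Set.indicator_of_mem hy]
        rfl
      · rw [hseteq, Set.indicator_of_notMem (show y ∉ {y | (x,y) ∈ S} from hy),
          Set.indicator_of_notMem hy]
    have step1 : θ k * μ (W k) ≤ ∫⁻ x in W k, μ (closedBall x ρk \ A₁) ∂μ := by
      rw [← setLIntegral_const (W k) (θ k)]
      refine setLIntegral_mono' (hWmeas k) fun x hx => ?_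
      exact hx.2
    have step2 : (∫⁻ x in W k, μ (closedBall x ρk \ A₁) ∂μ) ≤
        ∫⁻ x in A₁, μ (closedBall x ρk \ A₁) ∂μ :=
      lintegral_mono' (Measure.restrict_mono (fun z hz => hz.1) (le_refl μ)) (le_refl _)
    have step3 : (∫⁻ x in A₁, μ (closedBall x ρk \ A₁) ∂μ) =
        ∫⁻ y, ∫⁻ x, S.indicator 1 (x, y) ∂(μ.restrict A₁) ∂μ := by
      rw [show (fun x => μ (closedBall x ρk \ A₁)) = fun x => ∫⁻ y, S.indicator 1 (x, y) ∂μ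
        from funext hkey]
      exact lintegral_lintegral_swap ((measurable_const.indicator hSmeas).aemeasurable)
    have step4 : (∫⁻ y, ∫⁻ x, S.indicator 1 (x, y) ∂(μ.restrict A₁) ∂μ) ≤
        ∫⁻ _, (C:ℝ≥0∞) * ENNReal.ofReal ((2*ρk) ^ t) ∂μ := by
      refine lintegral_mono fun y => ?_
      by_cases hy : y ∈ A₁ᶜ
      · have hin : (fun x => S.indicator (1 : X × X → ℝ≥0∞) (x, y)) =
            fun x => (closedBall y ρk).indicator 1 x := by
          funext x
          by_cases hxy : x ∈ closedBall y ρk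
          · rw [Set.indicator_of_mem hxy,
              Set.indicator_of_mem (show (x,y) ∈ S from ⟨hy, mem_closedBall_comm.1 hxy⟩)]
            rfl
          · rw [Set.indicator_of_notMem hxy,
              Set.indicator_of_notMem (show (x,y) ∉ S from fun hcon =>
                hxy (mem_closedBall_comm.1 hcon.2))]
        rw [hin, lintegral_indicator_one measurableSet_closedBall,
          Measure.restrict_apply measurableSet_closedBall, Set.inter_comm]
        exact hball y ρk hρkpos
      · have hzero : (fun x => S.indicator (1 : X × X → ℝ≥0∞) (x, y)) = fun _ => 0 := by
          funext x
          rw [Set.indicator_of_notMem]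
          intro hcon
          exact hy hcon.1
        rw [hzero, lintegral_zero]
        exact zero_le
    calc θ k * μ (W k) ≤ _ := step1
      _ ≤ _ := step2
      _ = _ := step3
      _ ≤ ∫⁻ _, (C:ℝ≥0∞) * ENNReal.ofReal ((2*ρk) ^ t) ∂μ := step4
      _ = μ Set.univ * ((C:ℝ≥0∞) * ENNReal.ofReal ((2*ρk) ^ t)) := by
        rw [lintegral_const, mul_comm]
  -- summability of μ (W k)
  set q₀ : ℝ := (2:ℝ) ^ ((b:ℝ) - t) with hq₀
  have hq₀0 : 0 ≤ q₀ := by positivity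
  have hq₀1 : q₀ < 1 := Real.rpow_lt_one_of_one_lt_of_neg one_lt_two (by linarith)
  set Z : ℝ≥0∞ := μ Set.univ * (C:ℝ≥0∞) * ENNReal.ofReal ((2:ℝ) ^ (t + 1 + (b:ℝ))) with hZ
  have hZtop : Z ≠ ⊤ :=
    ENNReal.mul_ne_top (ENNReal.mul_ne_top (measure_ne_top μ _) (ENNReal.natCast_ne_top C))
      ENNReal.ofReal_ne_top
  have hWbound : ∀ k : ℕ, μ (W k) ≤ Z * ENNReal.ofReal q₀ ^ k := by
    intro k
    have hident : ENNReal.ofReal ((2 * (1/2:ℝ) ^ k) ^ t) =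
        ENNReal.ofReal ((2:ℝ) ^ (t + 1 + (b:ℝ))) * ENNReal.ofReal q₀ ^ k * θ k := by
      rw [hθ, ← ENNReal.ofReal_pow hq₀0, ← ENNReal.ofReal_mul (by positivity),
        ← ENNReal.ofReal_mul (by positivity)]
      congr 1
      rw [Real.mul_rpow (by norm_num) (by positivity), half_pow_rpow, hq₀, two_rpow_pow]
      have h2b : ((1/2:ℝ) ^ (k+1)) ^ b = (2:ℝ) ^ (-(((k:ℕ)+1:ℕ):ℝ) * (b:ℝ)) := by
        rw [← Real.rpow_natCast ((1/2:ℝ) ^ (k+1)) b, half_pow_rpow]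
      rw [h2b]
      rw [show (2:ℝ) ^ t * (2:ℝ) ^ (-(k:ℝ) * t) = (2:ℝ) ^ (t + -(k:ℝ)*t) from
        (Real.rpow_add (by norm_num) _ _).symm]
      rw [div_eq_mul_inv, show ((2:ℝ))⁻¹ = (2:ℝ) ^ (-1:ℝ) by
        rw [Real.rpow_neg_one]]
      rw [show (2:ℝ) ^ (t+1+(b:ℝ)) * (2:ℝ) ^ (((b:ℝ)-t) * (k:ℝ)) = 
        (2:ℝ) ^ ((t+1+(b:ℝ)) + ((b:ℝ)-t) * (k:ℝ)) from (Real.rpow_add (by norm_num) _ _).symm]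
      rw [show (2:ℝ) ^ (-(((k:ℕ)+1:ℕ):ℝ) * (b:ℝ)) * (2:ℝ) ^ (-1:ℝ) =
        (2:ℝ) ^ (-(((k:ℕ)+1:ℕ):ℝ) * (b:ℝ) + -1) from (Real.rpow_add (by norm_num) _ _).symm]
      rw [show (2:ℝ) ^ ((t+1+(b:ℝ)) + ((b:ℝ)-t) * (k:ℝ)) * (2:ℝ) ^ (-(((k:ℕ)+1:ℕ):ℝ) * (b:ℝ) + -1) =
        (2:ℝ) ^ (((t+1+(b:ℝ)) + ((b:ℝ)-t) * (k:ℝ)) + (-(((k:ℕ)+1:ℕ):ℝ) * (b:ℝ) + -1)) from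
        (Real.rpow_add (by norm_num) _ _).symm]
      congr 1
      push_cast
      ring
    have h1 : θ k * μ (W k) ≤ (Z * ENNReal.ofReal q₀ ^ k) * θ k := by
      calc θ k * μ (W k) ≤
          μ Set.univ * ((C:ℝ≥0∞) * ENNReal.ofReal ((2 * (1/2:ℝ) ^ k) ^ t)) := hJ k
        _ = (Z * ENNReal.ofReal q₀ ^ k) * θ k := by
          rw [hident, hZ]; ring
    rw [mul_comm (θ k) (μ (W k))] at h1
    exact (ENNReal.mul_le_mul_iff_left (hθ0 k) (hθtop k)).1 h1
  have hsum : (∑' k, μ (W k)) ≠ ⊤ := by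
    refine ne_top_of_le_ne_top ?_ (Summable.tsum_le_tsum hWbound ENNReal.summable ENNReal.summable)
    rw [ENNReal.tsum_mul_left, ENNReal.tsum_geometric]
    refine ENNReal.mul_ne_top hZtop (ENNReal.inv_ne_top.2 ?_)
    rw [Ne, tsub_eq_zero_iff_le]
    exact not_le.2 (ENNReal.ofReal_lt_one.2 hq₀1)
  have hBC : μ (limsup W atTop) = 0 := measure_limsup_atTop_eq_zero hsum
  -- the positive-measure set is inside the limsup
  have hsubset : A ∩ Gset μ b ∩ A₁ ⊆ limsup W atTop := by
    intro x hx
    have hxA₁ : x ∈ A₁ := hx.2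
    have hxG : x ∈ Gset μ b := hx.1.2
    rw [Filter.mem_limsup_iff_frequently_mem, Filter.frequently_atTop]
    -- find N₀
    have hN₀ : ∃ N₀ : ℕ, ∀ k ≥ N₀,
        (C:ℝ≥0∞) * ENNReal.ofReal (((1/2:ℝ) ^ k) ^ t) ≤ θ k := by
      have hid2 : ∀ k : ℕ, (C:ℝ) * ((1/2:ℝ) ^ k) ^ t =
          ((C:ℝ) * 2 ^ ((b:ℝ)+1) * q₀ ^ k) * (((1/2:ℝ) ^ (k+1)) ^ b / 2) := by
        intro k
        have e3 : ((1/2:ℝ) ^ (k+1)) ^ b = (2:ℝ) ^ ((-((k:ℝ)+1)) * (b:ℝ)) := by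
          rw [← Real.rpow_natCast ((1/2:ℝ) ^ (k+1)) b, half_pow_rpow]
          congr 1
          push_cast
          ring
        rw [half_pow_rpow, hq₀, two_rpow_pow, e3, div_eq_mul_inv,
          show ((2:ℝ))⁻¹ = (2:ℝ) ^ (-1:ℝ) from (Real.rpow_neg_one 2).symm]
        exact collect5 _ _ _ _ _ _ (by push_cast; ring)
      have htend : Tendsto (fun k : ℕ => (C:ℝ) * 2 ^ ((b:ℝ)+1) * q₀ ^ k) atTop (𝓝 0) := by
        have := tendsto_pow_atTop_nhds_zero_of_lt_one hq₀0 hq₀1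
        simpa using this.const_mul ((C:ℝ) * 2 ^ ((b:ℝ)+1))
      have hev := htend.eventually_lt_const one_pos
      rw [eventually_atTop] at hev
      obtain ⟨N₀, hN₀⟩ := hev
      refine ⟨N₀, fun k hk => ?_⟩
      have hreal : (C:ℝ) * ((1/2:ℝ) ^ k) ^ t ≤ ((1/2:ℝ) ^ (k+1)) ^ b / 2 := by
        rw [hid2 k]
        exact mul_le_of_le_one_left (by positivity) (hN₀ k hk).le
      rw [hθ]
      calc (C:ℝ≥0∞) * ENNReal.ofReal (((1/2:ℝ) ^ k) ^ t) =
          ENNReal.ofReal ((C:ℝ) * ((1/2:ℝ) ^ k) ^ t) := by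
            rw [ENNReal.ofReal_mul (by positivity), ENNReal.ofReal_natCast]
        _ ≤ ENNReal.ofReal (((1/2:ℝ) ^ (k+1)) ^ b / 2) := ENNReal.ofReal_le_ofReal hreal
    obtain ⟨N₀, hN₀⟩ := hN₀
    intro N
    obtain ⟨k, hk1, hk2⟩ := hxG (max N N₀)
    refine ⟨k, le_trans (le_max_left _ _) hk1, hxA₁, ?_⟩
    -- x ∈ {x | θ k ≤ μ (closedBall x ρk \ A₁)}
    have hsmall : μ (A₁ ∩ closedBall x ((1/2:ℝ) ^ k)) ≤ θ k := by
      have h1 : μ (A₁ ∩ closedBall x ((1/2:ℝ) ^ k)) ≤ ν (closedBall x ((1/2:ℝ) ^ k)) := by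
        rw [hν, Measure.restrict_apply measurableSet_closedBall]
        exact measure_mono (fun z hz => ⟨hz.2, hz.1.1⟩)
      have h2 : ν (closedBall x ((1/2:ℝ) ^ k)) ≤
          ENNReal.ofReal (((1/2:ℝ) ^ k) ^ t) * potential ν t x :=
        measure_closedBall_le_potential ν ht0 (by positivity) x
      have h3 : ENNReal.ofReal (((1/2:ℝ) ^ k) ^ t) * potential ν t x ≤
          (C:ℝ≥0∞) * ENNReal.ofReal (((1/2:ℝ) ^ k) ^ t) := by
        rw [mul_comm]
        exact mul_le_mul_left hxA₁.2 _
      exact le_trans h1 (le_trans h2 (le_trans h3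
        (hN₀ k (le_trans (le_max_right _ _) hk1))))
    have hcover : μ (closedBall x ((1/2:ℝ) ^ k)) ≤
        μ (A₁ ∩ closedBall x ((1/2:ℝ) ^ k)) + μ (closedBall x ((1/2:ℝ) ^ k) \ A₁) := by
      rw [Set.inter_comm]
      exact measure_le_inter_add_diff μ _ _
    have hdouble : θ k + θ k = ENNReal.ofReal (((1/2:ℝ) ^ (k+1)) ^ b) := by
      rw [hθ, ← ENNReal.ofReal_add (by positivity) (by positivity)]
      congr 1
      ring
    have hfinal : θ k + θ k ≤ θ k + μ (closedBall x ((1/2:ℝ) ^ k) \ A₁) := by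
      rw [hdouble]
      refine le_trans hk2 (le_trans hcover ?_)
      exact add_le_add_left hsmall _
    exact (ENNReal.add_le_add_iff_left (hθtop k)).1 hfinal
  have : (0:ℝ≥0∞) < 0 := by
    calc (0:ℝ≥0∞) < μ (A ∩ Gset μ b ∩ A₁) := hQpos
      _ ≤ μ (limsup W atTop) := measure_mono hsubset
      _ = 0 := hBC
  exact lt_irrefl _ this

end BddAboveSec
end Aux

theorem exists_compact_corrDim_ge_lowerHausdorffDim {X : Type*} [MetricSpace X]
    [CompactSpace X] [MeasurableSpace X] [BorelSpace X]
    (μ : Measure X) [IsFiniteMeasure μ] [μ.Regular] (ε : ℝ) (hε : 0 < ε) :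
    ∃ A : Set X, IsCompact A ∧ μ Aᶜ < ENNReal.ofReal ε ∧
      lowerHausdorffDim μ ≤ corrDim (μ.restrict A) := by
  have hsc : SecondCountableTopology X := inferInstance
  set D := lowerHausdorffDim μ with hDdef
  rcases le_or_gt D 0 with hD0 | hDpos
  · -- Case D ≤ 0 : take A = univ
    refine ⟨Set.univ, isCompact_univ, ?_, ?_⟩
    · rw [Set.compl_univ]
      simpa using ENNReal.ofReal_pos.2 hε
    · rw [Measure.restrict_univ]
      have h0S : (0:ℝ) ∈ {s : ℝ | energy μ s < ⊤} := by
        have henergy0 : energy μ 0 = μ Set.univ * μ Set.univ := by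
          rw [energy]
          simp [neg_zero, ENNReal.rpow_zero, lintegral_one, lintegral_const]
        simp only [Set.mem_setOf_eq, henergy0]
        exact ENNReal.mul_lt_top (measure_lt_top μ _) (measure_lt_top μ _)
      by_cases hbdd : BddAbove {s : ℝ | energy μ s < ⊤}
      · exact le_trans hD0 (le_csSup hbdd h0S)
      · rw [corrDim, Real.sSup_of_not_bddAbove hbdd]
        exact hD0
  · -- Case D > 0
    have hμ0 : μ ≠ 0 := by
      intro hμz
      have hDzero : D = 0 := by
        rw [hDdef, lowerHausdorffDim, hμz, essInf, MeasureTheory.ae_zero, liminf_eq]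
        have huniv : {a : ℝ | ∀ᶠ x in (⊥ : Filter X), a ≤ lowerLocalDim 0 x} = Set.univ := by
          ext a; simp
        rw [huniv, Real.sSup_univ]
      linarith
    have hμuniv0 : μ Set.univ ≠ 0 := fun h => hμ0 (Measure.measure_univ_eq_zero.1 h)
    have hFact : ∀ c : ℝ, 0 ≤ c → c < D → ∃ a, c < a ∧ ∀ᵐ x ∂μ, a ≤ lowerLocalDim μ x := by
      intro c hc0 hcD
      have hD_eq : D = sSup {a : ℝ | ∀ᵐ x ∂μ, a ≤ lowerLocalDim μ x} := by
        rw [hDdef, lowerHausdorffDim, essInf, liminf_eq]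
      have hne : {a : ℝ | ∀ᵐ x ∂μ, a ≤ lowerLocalDim μ x}.Nonempty := by
        by_contra h
        rw [Set.not_nonempty_iff_eq_empty] at h
        rw [h, Real.sSup_empty] at hD_eq
        linarith
      obtain ⟨a, haS, hca⟩ := exists_lt_of_lt_csSup hne (by rw [← hD_eq]; exact hcD)
      exact ⟨a, hca, haS⟩
    obtain ⟨a₀, ha₀pos, ha₀⟩ := hFact 0 le_rfl hDpos
    set sq : ℕ → ℝ := fun n => D - D / ((n:ℝ)+2) with hsq
    have hsq_pos : ∀ n : ℕ, 0 < sq n := by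
      intro n
      have h1 : D / ((n:ℝ)+2) < D :=
        div_lt_self hDpos (by
          have : (0:ℝ) ≤ (n:ℝ) := Nat.cast_nonneg n
          linarith)
      simp only [hsq]
      linarith
    have hsq_lt : ∀ n : ℕ, sq n < D := by
      intro n
      have h1 : 0 < D / ((n:ℝ)+2) := by positivity
      simp only [hsq]
      linarith
    set e' : ℝ := min (ε/2) ((μ Set.univ).toReal / 2) with he'
    have he'pos : 0 < e' := by
      refine lt_min (by linarith) ?_
      have := ENNReal.toReal_pos hμuniv0 (measure_ne_top μ _)
      linarith
    have hEn : ∀ n : ℕ, ∃ δ : ℝ, 0 < δ ∧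
        μ (Eset μ (sq n) δ)ᶜ < ENNReal.ofReal (e' * (1/2:ℝ)^(n+1)) := by
      intro n
      obtain ⟨a, hsa, hae_a⟩ := hFact (sq n) (hsq_pos n).le (hsq_lt n)
      have haeU : ∀ᵐ x ∂μ, x ∈ ⋃ m : ℕ, Eset μ (sq n) (1/((m:ℝ)+1)) := by
        filter_upwards [hae_a] with x hx
        have hev := eventually_ball_le μ hx (hsq_pos n) hsa
        have hmem : {r : ℝ | μ (closedBall x r) ≤ ENNReal.ofReal (r ^ (sq n))} ∈
            𝓝[>] (0:ℝ) := hev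
        obtain ⟨u, hu, hsubIoo⟩ := mem_nhdsGT_iff_exists_Ioo_subset.1 hmem
        obtain ⟨m, hm⟩ := exists_nat_one_div_lt (show (0:ℝ) < u from hu)
        refine Set.mem_iUnion.2 ⟨m, fun r hr0 hrm => ?_⟩
        exact hsubIoo ⟨hr0, lt_trans hrm (by exact_mod_cast hm)⟩
      have hmono : ∀ m m' : ℕ, m ≤ m' →
          Eset μ (sq n) (1/((m:ℝ)+1)) ⊆ Eset μ (sq n) (1/((m':ℝ)+1)) := by
        intro m m' hmm' x hx r hr0 hrm'
        refine hx r hr0 (lt_of_lt_of_le hrm' ?_)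
        refine one_div_le_one_div_of_le (by positivity) ?_
        have : (m:ℝ) ≤ (m':ℝ) := Nat.cast_le.2 hmm'
        linarith
      have hnull : μ (⋂ m : ℕ, (Eset μ (sq n) (1/((m:ℝ)+1)))ᶜ) = 0 := by
        rw [← Set.compl_iUnion]
        exact mem_ae_iff.1 haeU
      have htends := tendsto_measure_iInter_atTop
        (μ := μ) (s := fun m : ℕ => (Eset μ (sq n) (1/((m:ℝ)+1)))ᶜ)
        (fun m => ((isClosed_Eset μ (sq n) (1/((m:ℝ)+1))).measurableSet.compl).nullMeasurableSet)
        (fun i j hij => Set.compl_subset_compl.2 (hmono i j hij))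
        ⟨0, measure_ne_top μ _⟩
      rw [hnull] at htends
      have hpos : (0:ℝ≥0∞) < ENNReal.ofReal (e' * (1/2:ℝ)^(n+1)) :=
        ENNReal.ofReal_pos.2 (by positivity)
      obtain ⟨m, hm⟩ := (htends.eventually (gt_mem_nhds hpos)).exists
      exact ⟨1/((m:ℝ)+1), by positivity, hm⟩
    choose δ hδpos hδsmall using hEn
    set A := ⋂ n : ℕ, Eset μ (sq n) (δ n) with hA
    have hAclosed : IsClosed A := isClosed_iInter fun n => isClosed_Eset μ _ _
    have hAcompact : IsCompact A := hAclosed.isCompact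
    have hAmeas : MeasurableSet A := hAclosed.measurableSet
    have hAc : μ Aᶜ ≤ ENNReal.ofReal e' := by
      rw [hA, Set.compl_iInter]
      refine le_trans (measure_iUnion_le _) ?_
      have hhalf : ENNReal.ofReal ((1/2:ℝ)) = 2⁻¹ := by
        rw [show (1/2:ℝ) = 2⁻¹ by norm_num, ENNReal.ofReal_inv_of_pos (by norm_num)]
        norm_num
      calc ∑' n : ℕ, μ (Eset μ (sq n) (δ n))ᶜ ≤
          ∑' n : ℕ, ENNReal.ofReal (e' * (1/2:ℝ)^(n+1)) :=
            Summable.tsum_le_tsum (fun n => (hδsmall n).le) ENNReal.summable ENNReal.summable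
        _ = ENNReal.ofReal e' * ∑' n : ℕ, (ENNReal.ofReal ((1/2:ℝ)))^(n+1) := by
            rw [← ENNReal.tsum_mul_left]
            congr 1
            funext n
            rw [ENNReal.ofReal_mul he'pos.le, ENNReal.ofReal_pow (by norm_num)]
        _ ≤ ENNReal.ofReal e' * 1 := by
            refine mul_le_mul_right (le_of_eq ?_) _
            calc ∑' n : ℕ, (ENNReal.ofReal ((1/2:ℝ)))^(n+1) =
                ENNReal.ofReal ((1/2:ℝ)) * ∑' n : ℕ, (ENNReal.ofReal ((1/2:ℝ)))^n := by
                  rw [← ENNReal.tsum_mul_left]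
                  congr 1
                  funext n
                  rw [pow_succ, mul_comm]
              _ = 2⁻¹ * (1 - 2⁻¹)⁻¹ := by rw [hhalf, ENNReal.tsum_geometric]
              _ = 1 := by
                  rw [ENNReal.one_sub_inv_two, inv_inv]
                  exact ENNReal.inv_mul_cancel (by norm_num) (by norm_num)
        _ = ENNReal.ofReal e' := mul_one _
    have hAcε : μ Aᶜ < ENNReal.ofReal ε := by
      refine lt_of_le_of_lt (le_trans hAc (ENNReal.ofReal_le_ofReal (min_le_left _ _))) ?_
      exact (ENNReal.ofReal_lt_ofReal_iff hε).2 (by linarith)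
    have hApos : μ A ≠ 0 := by
      intro h0
      have h1 : μ Set.univ ≤ μ A + μ Aᶜ := by
        rw [← Set.union_compl_self A]
        exact measure_union_le _ _
      rw [h0, zero_add] at h1
      have h2 : μ Aᶜ < μ Set.univ := by
        refine lt_of_le_of_lt (le_trans hAc (ENNReal.ofReal_le_ofReal (min_le_right _ _))) ?_
        rw [ENNReal.ofReal_lt_iff_lt_toReal (by positivity) (measure_ne_top μ _)]
        have := ENNReal.toReal_pos hμuniv0 (measure_ne_top μ _)
        linarith
      exact absurd (lt_of_le_of_lt h1 h2) (lt_irrefl _)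
    have haeG : ∀ᵐ x ∂μ, ∃ b : ℕ, x ∈ Gset μ b := by
      filter_upwards [ha₀] with x hx
      exact exists_Gb μ ha₀pos hx
    obtain ⟨b, hb⟩ : ∃ b : ℕ, μ (A ∩ Gset μ b) ≠ 0 := by
      by_contra h
      push_neg at h
      have hUnull : μ (⋃ b : ℕ, A ∩ Gset μ b) = 0 := measure_iUnion_null fun b => h b
      have hdiffnull : μ (A \ ⋃ b : ℕ, Gset μ b) = 0 := by
        refine measure_mono_null (fun z hz => ?_) (ae_iff.1 haeG)
        intro hcon
        obtain ⟨b', hb'⟩ := hcon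
        exact hz.2 (Set.mem_iUnion.2 ⟨b', hb'⟩)
      have hsplit : μ A ≤ μ (⋃ b : ℕ, A ∩ Gset μ b) + μ (A \ ⋃ b : ℕ, Gset μ b) := by
        refine le_trans (measure_mono ?_) (measure_union_le _ _)
        intro z hz
        by_cases hzb : ∃ b : ℕ, z ∈ Gset μ b
        · obtain ⟨b', hzb⟩ := hzb
          exact Or.inl (Set.mem_iUnion.2 ⟨b', hz, hzb⟩)
        · exact Or.inr ⟨hz, fun hcon => hzb (Set.mem_iUnion.1 hcon)⟩
      rw [hUnull, hdiffnull, add_zero] at hsplit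
      exact hApos (nonpos_iff_eq_zero.1 hsplit)
    have hGbpos : 0 < μ (A ∩ Gset μ b) := pos_iff_ne_zero.2 hb
    have hBdd := bddAbove_energySet μ hAmeas b hGbpos
    have hIoo : Set.Ioo (0:ℝ) D ⊆ {t : ℝ | energy (μ.restrict A) t < ⊤} := by
      rintro t ⟨ht0, htD⟩
      obtain ⟨n, hn⟩ : ∃ n : ℕ, t < sq n := by
        obtain ⟨n, hn⟩ := exists_nat_gt (D / (D - t))
        have hDt : 0 < D - t := by linarith
        refine ⟨n, ?_⟩
        have h3 : D / (D - t) < (n:ℝ) + 2 := lt_of_lt_of_le hn (by linarith)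
        rw [div_lt_iff₀ hDt] at h3
        have h4 : D / ((n:ℝ)+2) < D - t := by
          rw [div_lt_iff₀ (show (0:ℝ) < (n:ℝ)+2 by positivity)]
          nlinarith
        simp only [hsq]
        linarith
      exact energy_restrict_lt_top μ hAmeas (Set.iInter_subset _ n) (hδpos n) ht0 hn
    refine ⟨A, hAcompact, hAcε, ?_⟩
    rw [corrDim]
    calc D = sSup (Set.Ioo (0:ℝ) D) := (csSup_Ioo hDpos).symm
      _ ≤ sSup {t : ℝ | energy (μ.restrict A) t < ⊤} :=
          csSup_le_csSup hBdd (Set.nonempty_Ioo.2 hDpos) hIoo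
end

section
/- For the Bernoulli measure μ_p on the middle-thirds Cantor set associated to the probability vector (p, 1−p), the correlation dimension equals −log₃(p² + (1−p)²). -/
open MeasureTheory Filter Metric Set Topology
open scoped ENNReal

section Aux

variable {p : ℝ} {μ : Measure ℝ}

lemma bc_apply (hp : p ∈ Set.Ioo (0:ℝ) 1)
    (hμ : μ = ENNReal.ofReal p • μ.map (fun x => x / 3)
        + ENNReal.ofReal (1 - p) • μ.map (fun x => x / 3 + 2 / 3))
    {s : Set ℝ} (hs : MeasurableSet s) :
    μ s = ENNReal.ofReal p * μ ((fun x : ℝ => x / 3) ⁻¹' s)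
        + ENNReal.ofReal (1 - p) * μ ((fun x : ℝ => x / 3 + 2 / 3) ⁻¹' s) := by
  have h0 : Measurable (fun x : ℝ => x / 3) := by fun_prop
  have h1 : Measurable (fun x : ℝ => x / 3 + 2 / 3) := by fun_prop
  conv_lhs => rw [hμ]
  simp [Measure.map_apply h0 hs, Measure.map_apply h1 hs]

lemma bc_supp [IsProbabilityMeasure μ] (hp : p ∈ Set.Ioo (0:ℝ) 1)
    (hμ : μ = ENNReal.ofReal p • μ.map (fun x => x / 3)
        + ENNReal.ofReal (1 - p) • μ.map (fun x => x / 3 + 2 / 3)) :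
    μ (Set.Icc (0:ℝ) 1)ᶜ = 0 := by
  have hsum : ENNReal.ofReal p + ENNReal.ofReal (1 - p) = 1 := by
    rw [← ENNReal.ofReal_add hp.1.le (by linarith [hp.2])]
    norm_num
  -- left side
  have hF : ∀ t : ℝ, μ (Set.Iio (-t)) ≤ μ (Set.Iio (-(3*t))) := by
    intro t
    have := bc_apply hp hμ (s := Set.Iio (-t)) measurableSet_Iio
    have e0 : (fun x : ℝ => x / 3) ⁻¹' Set.Iio (-t) = Set.Iio (-(3*t)) := by
      ext x; simp only [Set.mem_preimage, Set.mem_Iio]; constructor <;> intro h <;> linarith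
    have e1 : (fun x : ℝ => x / 3 + 2/3) ⁻¹' Set.Iio (-t) = Set.Iio (-(3*t+2)) := by
      ext x; simp only [Set.mem_preimage, Set.mem_Iio]; constructor <;> intro h <;> linarith
    rw [e0, e1] at this
    calc μ (Set.Iio (-t)) = _ := this
      _ ≤ ENNReal.ofReal p * μ (Set.Iio (-(3*t)))
          + ENNReal.ofReal (1-p) * μ (Set.Iio (-(3*t))) := by
        gcongr
        linarith
      _ = μ (Set.Iio (-(3*t))) := by rw [← add_mul, hsum, one_mul]
  have hFn : ∀ (t : ℝ) (n : ℕ), μ (Set.Iio (-t)) ≤ μ (Set.Iio (-(3^n*t))) := by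
    intro t n
    induction n generalizing t with
    | zero => simp
    | succ n ih =>
      refine (hF t).trans ?_
      have := ih (3*t)
      convert this using 3
      case e'_4 => ring
      case e'_2 => rfl
  have hF0 : ∀ t : ℝ, 0 < t → μ (Set.Iio (-t)) = 0 := by
    intro t ht
    have hanti : Antitone (fun n : ℕ => Set.Iio (-(3^n*t))) := by
      intro m n hmn x hx
      simp only [Set.mem_Iio] at *
      have : (3:ℝ)^m ≤ 3^n := pow_le_pow_right₀ (by norm_num) hmn
      nlinarith
    have hinter : (⋂ n : ℕ, Set.Iio (-(3^n*t))) = ∅ := by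
      ext x
      simp only [Set.mem_iInter, Set.mem_Iio, Set.mem_empty_iff_false, iff_false, not_forall,
        not_lt]
      obtain ⟨n, hn⟩ := pow_unbounded_of_one_lt (max 1 (-x/t)) (by norm_num : (1:ℝ) < 3)
      refine ⟨n, ?_⟩
      have : -x/t < 3^n := lt_of_le_of_lt (le_max_right _ _) hn
      have h2 : -x < 3^n * t := by
        have := (div_lt_iff₀ ht).mp this
        linarith
      linarith
    have htend := tendsto_measure_iInter_atTop (μ := μ)
      (fun n => (measurableSet_Iio).nullMeasurableSet) hanti ⟨0, (measure_lt_top _ _).ne⟩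
    rw [hinter] at htend
    simp only [measure_empty] at htend
    have := ge_of_tendsto htend (Eventually.of_forall (fun n => hFn t n))
    exact le_antisymm this zero_le
  -- right side
  have hG : ∀ t : ℝ, μ (Set.Ioi (1+t)) ≤ μ (Set.Ioi (1+3*t)) := by
    intro t
    have := bc_apply hp hμ (s := Set.Ioi (1+t)) measurableSet_Ioi
    have e0 : (fun x : ℝ => x / 3) ⁻¹' Set.Ioi (1+t) = Set.Ioi (3+3*t) := by
      ext x; simp only [Set.mem_preimage, Set.mem_Ioi]; constructor <;> intro h <;> linarith
    have e1 : (fun x : ℝ => x / 3 + 2/3) ⁻¹' Set.Ioi (1+t) = Set.Ioi (1+3*t) := by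
      ext x; simp only [Set.mem_preimage, Set.mem_Ioi]; constructor <;> intro h <;> linarith
    rw [e0, e1] at this
    calc μ (Set.Ioi (1+t)) = _ := this
      _ ≤ ENNReal.ofReal p * μ (Set.Ioi (1+3*t))
          + ENNReal.ofReal (1-p) * μ (Set.Ioi (1+3*t)) := by
        gcongr
        linarith
      _ = μ (Set.Ioi (1+3*t)) := by rw [← add_mul, hsum, one_mul]
  have hGn : ∀ (t : ℝ) (n : ℕ), μ (Set.Ioi (1+t)) ≤ μ (Set.Ioi (1+3^n*t)) := by
    intro t n
    induction n generalizing t with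
    | zero => simp
    | succ n ih =>
      refine (hG t).trans ?_
      have := ih (3*t)
      convert this using 3
      case e'_4 => ring
      case e'_2 => rfl
  have hG0 : ∀ t : ℝ, 0 < t → μ (Set.Ioi (1+t)) = 0 := by
    intro t ht
    have hanti : Antitone (fun n : ℕ => Set.Ioi (1+3^n*t)) := by
      intro m n hmn x hx
      simp only [Set.mem_Ioi] at *
      have : (3:ℝ)^m ≤ 3^n := pow_le_pow_right₀ (by norm_num) hmn
      nlinarith
    have hinter : (⋂ n : ℕ, Set.Ioi (1+3^n*t)) = ∅ := by
      ext x
      simp only [Set.mem_iInter, Set.mem_Ioi, Set.mem_empty_iff_false, iff_false, not_forall,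
        not_lt]
      obtain ⟨n, hn⟩ := pow_unbounded_of_one_lt (max 1 ((x-1)/t)) (by norm_num : (1:ℝ) < 3)
      refine ⟨n, ?_⟩
      have : (x-1)/t < 3^n := lt_of_le_of_lt (le_max_right _ _) hn
      have h2 : x - 1 < 3^n * t := by
        have := (div_lt_iff₀ ht).mp this
        linarith
      linarith
    have htend := tendsto_measure_iInter_atTop (μ := μ)
      (fun n => (measurableSet_Ioi).nullMeasurableSet) hanti ⟨0, (measure_lt_top _ _).ne⟩
    rw [hinter] at htend
    simp only [measure_empty] at htend
    have := ge_of_tendsto htend (Eventually.of_forall (fun n => hGn t n))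
    exact le_antisymm this zero_le
  have hsub : (Set.Icc (0:ℝ) 1)ᶜ ⊆ Set.Iio 0 ∪ Set.Ioi 1 := by
    intro x hx
    simp only [Set.mem_compl_iff, Set.mem_Icc, not_and_or, not_le] at hx
    rcases hx with h|h
    · exact Or.inl h
    · exact Or.inr h
  refine measure_mono_null hsub (measure_union_null ?_ ?_)
  · refine measure_mono_null (fun x hx => ?_) (measure_iUnion_null
      (fun n : ℕ => hF0 (1/(n+1)) (by positivity)))
    simp only [Set.mem_Iio] at hx
    obtain ⟨n, hn⟩ := exists_nat_one_div_lt (by linarith : (0:ℝ) < -x)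
    exact Set.mem_iUnion.2 ⟨n, by simp only [Set.mem_Iio]; linarith⟩
  · refine measure_mono_null (fun x hx => ?_) (measure_iUnion_null
      (fun n : ℕ => hG0 (1/(n+1)) (by positivity)))
    simp only [Set.mem_Ioi] at hx
    obtain ⟨n, hn⟩ := exists_nat_one_div_lt (by linarith : (0:ℝ) < x - 1)
    exact Set.mem_iUnion.2 ⟨n, by simp only [Set.mem_Ioi]; linarith⟩

lemma smul_prod_smul {c d : ℝ≥0∞} (hc : c ≠ ⊤) (hd : d ≠ ⊤) (μ ν : Measure ℝ)
    [IsFiniteMeasure μ] [IsFiniteMeasure ν] :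
    (c • μ).prod (d • ν) = (c * d) • μ.prod ν := by
  haveI : IsFiniteMeasure (c • μ) :=
    ⟨by simp only [Measure.smul_apply, smul_eq_mul]
        exact ENNReal.mul_lt_top hc.lt_top (measure_lt_top μ _)⟩
  haveI : IsFiniteMeasure (d • ν) :=
    ⟨by simp only [Measure.smul_apply, smul_eq_mul]
        exact ENNReal.mul_lt_top hd.lt_top (measure_lt_top ν _)⟩
  refine Measure.prod_eq (μ := c • μ) (ν := d • ν) (μν := (c*d) • μ.prod ν)
    fun s t hs ht => ?_
  simp only [Measure.smul_apply, smul_eq_mul, Measure.prod_prod]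
  ring

lemma bc_prod_null [IsProbabilityMeasure μ] (hp : p ∈ Set.Ioo (0:ℝ) 1)
    (hμ : μ = ENNReal.ofReal p • μ.map (fun x => x / 3)
        + ENNReal.ofReal (1 - p) • μ.map (fun x => x / 3 + 2 / 3)) :
    (μ.prod μ) ((Set.Icc (0:ℝ) 1 ×ˢ Set.Icc (0:ℝ) 1)ᶜ) = 0 := by
  have h := bc_supp hp hμ
  have hsub : ((Set.Icc (0:ℝ) 1 ×ˢ Set.Icc (0:ℝ) 1 : Set (ℝ×ℝ)))ᶜ ⊆
      ((Set.Icc (0:ℝ) 1)ᶜ ×ˢ (Set.univ : Set ℝ)) ∪ ((Set.univ : Set ℝ) ×ˢ (Set.Icc (0:ℝ) 1)ᶜ) := by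
    intro z hz
    simp only [Set.mem_compl_iff, Set.mem_prod, not_and_or, Set.mem_union, Set.mem_univ,
      and_true, true_and] at *
    tauto
  refine measure_mono_null hsub (measure_union_null ?_ ?_) <;>
    simp [Measure.prod_prod, h]

lemma bc_measurable_D (r : ℝ) : MeasurableSet {z : ℝ × ℝ | |z.1 - z.2| < r} :=
  measurableSet_lt (by fun_prop) measurable_const

lemma bc_prod_rec [IsProbabilityMeasure μ] (hp : p ∈ Set.Ioo (0:ℝ) 1)
    (hμ : μ = ENNReal.ofReal p • μ.map (fun x => x / 3)
        + ENNReal.ofReal (1 - p) • μ.map (fun x => x / 3 + 2 / 3))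
    {r : ℝ} (hr3 : 3 * r ≤ 1) :
    (μ.prod μ) {z : ℝ × ℝ | |z.1 - z.2| < r}
      = ENNReal.ofReal (p^2 + (1-p)^2) * (μ.prod μ) {z : ℝ × ℝ | |z.1 - z.2| < 3*r} := by
  have h0 : Measurable (fun x : ℝ => x / 3) := by fun_prop
  have h1 : Measurable (fun x : ℝ => x / 3 + 2 / 3) := by fun_prop
  haveI : IsProbabilityMeasure (μ.map (fun x : ℝ => x / 3)) :=
    Measure.isProbabilityMeasure_map h0.aemeasurable
  haveI : IsProbabilityMeasure (μ.map (fun x : ℝ => x / 3 + 2 / 3)) :=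
    Measure.isProbabilityMeasure_map h1.aemeasurable
  set w0 := ENNReal.ofReal p with hw0
  set w1 := ENNReal.ofReal (1 - p) with hw1
  have hw0t : w0 ≠ ⊤ := ENNReal.ofReal_ne_top
  have hw1t : w1 ≠ ⊤ := ENNReal.ofReal_ne_top
  have hprod : μ.prod μ =
      (w0 * w0) • ((μ.prod μ).map (Prod.map (fun x : ℝ => x / 3) (fun x : ℝ => x / 3)))
      + (w0 * w1) • ((μ.prod μ).map (Prod.map (fun x : ℝ => x / 3) (fun x : ℝ => x / 3 + 2/3)))
      + (w1 * w0) • ((μ.prod μ).map (Prod.map (fun x : ℝ => x / 3 + 2/3) (fun x : ℝ => x / 3)))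
      + (w1 * w1) • ((μ.prod μ).map (Prod.map (fun x : ℝ => x / 3 + 2/3) (fun x : ℝ => x / 3 + 2/3))) := by
    conv_lhs => rw [hμ]
    rw [Measure.add_prod, Measure.prod_add, Measure.prod_add,
      smul_prod_smul hw0t hw0t, smul_prod_smul hw0t hw1t,
      smul_prod_smul hw1t hw0t, smul_prod_smul hw1t hw1t,
      Measure.map_prod_map _ _ h0 h0, Measure.map_prod_map _ _ h0 h1,
      Measure.map_prod_map _ _ h1 h0, Measure.map_prod_map _ _ h1 h1]
    abel
  have hmap00 : Measurable (Prod.map (fun x : ℝ => x / 3) (fun x : ℝ => x / 3)) := h0.prodMap h0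
  have hmap01 : Measurable (Prod.map (fun x : ℝ => x / 3) (fun x : ℝ => x / 3 + 2/3)) := h0.prodMap h1
  have hmap10 : Measurable (Prod.map (fun x : ℝ => x / 3 + 2/3) (fun x : ℝ => x / 3)) := h1.prodMap h0
  have hmap11 : Measurable (Prod.map (fun x : ℝ => x / 3 + 2/3) (fun x : ℝ => x / 3 + 2/3)) := h1.prodMap h1
  have hD : ∀ r : ℝ, MeasurableSet {z : ℝ × ℝ | |z.1 - z.2| < r} := bc_measurable_D
  have e00 : (Prod.map (fun x : ℝ => x / 3) (fun x : ℝ => x / 3)) ⁻¹' {z : ℝ × ℝ | |z.1 - z.2| < r}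
      = {z : ℝ × ℝ | |z.1 - z.2| < 3*r} := by
    ext z
    simp only [Set.mem_preimage, Prod.map, Set.mem_setOf_eq]
    rw [show z.1/3 - z.2/3 = (z.1 - z.2)/3 by ring, abs_div]
    rw [abs_of_pos (by norm_num : (0:ℝ) < 3), div_lt_iff₀ (by norm_num : (0:ℝ) < 3)]
    constructor <;> intro h <;> linarith
  have e11 : (Prod.map (fun x : ℝ => x / 3 + 2/3) (fun x : ℝ => x / 3 + 2/3)) ⁻¹' {z : ℝ × ℝ | |z.1 - z.2| < r}
      = {z : ℝ × ℝ | |z.1 - z.2| < 3*r} := by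
    ext z
    simp only [Set.mem_preimage, Prod.map, Set.mem_setOf_eq]
    rw [show z.1/3 + 2/3 - (z.2/3 + 2/3) = (z.1 - z.2)/3 by ring, abs_div]
    rw [abs_of_pos (by norm_num : (0:ℝ) < 3), div_lt_iff₀ (by norm_num : (0:ℝ) < 3)]
    constructor <;> intro h <;> linarith
  have h01 : (μ.prod μ) ((Prod.map (fun x : ℝ => x / 3) (fun x : ℝ => x / 3 + 2/3)) ⁻¹' {z : ℝ × ℝ | |z.1 - z.2| < r}) = 0 := by
    refine measure_mono_null (fun z hz => ?_) (bc_prod_null hp hμ)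
    simp only [Set.mem_preimage, Prod.map, Set.mem_setOf_eq] at hz
    simp only [Set.mem_compl_iff, Set.mem_prod, Set.mem_Icc, not_and_or, not_le]
    by_contra hcon
    push_neg at hcon
    obtain ⟨⟨hx0, hx1⟩, hy0, hy1⟩ := hcon
    have hle : z.1/3 - (z.2/3 + 2/3) ≤ -(1/3) := by linarith
    have := neg_le_abs (z.1/3 - (z.2/3 + 2/3))
    linarith
  have h10 : (μ.prod μ) ((Prod.map (fun x : ℝ => x / 3 + 2/3) (fun x : ℝ => x / 3)) ⁻¹' {z : ℝ × ℝ | |z.1 - z.2| < r}) = 0 := by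
    refine measure_mono_null (fun z hz => ?_) (bc_prod_null hp hμ)
    simp only [Set.mem_preimage, Prod.map, Set.mem_setOf_eq] at hz
    simp only [Set.mem_compl_iff, Set.mem_prod, Set.mem_Icc, not_and_or, not_le]
    by_contra hcon
    push_neg at hcon
    obtain ⟨⟨hx0, hx1⟩, hy0, hy1⟩ := hcon
    have hle : (1:ℝ)/3 ≤ z.1/3 + 2/3 - z.2/3 := by linarith
    have := le_abs_self (z.1/3 + 2/3 - z.2/3)
    linarith
  conv_lhs => rw [hprod]
  rw [Measure.add_apply, Measure.add_apply, Measure.add_apply]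
  simp only [Measure.smul_apply, smul_eq_mul,
    Measure.map_apply hmap00 (hD r), Measure.map_apply hmap01 (hD r),
    Measure.map_apply hmap10 (hD r), Measure.map_apply hmap11 (hD r)]
  rw [e00, e11, h01, h10, mul_zero, mul_zero, add_zero, add_zero]
  rw [← add_mul]
  congr 1
  rw [hw0, hw1, ← ENNReal.ofReal_mul hp.1.le, ← ENNReal.ofReal_mul (by linarith [hp.2])]
  rw [← ENNReal.ofReal_add (mul_self_nonneg p) (mul_self_nonneg (1-p))]
  ring_nf

lemma bc_Cn [IsProbabilityMeasure μ] (hp : p ∈ Set.Ioo (0:ℝ) 1)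
    (hμ : μ = ENNReal.ofReal p • μ.map (fun x => x / 3)
        + ENNReal.ofReal (1 - p) • μ.map (fun x => x / 3 + 2 / 3)) (n : ℕ) :
    (μ.prod μ) {z : ℝ × ℝ | |z.1 - z.2| < (1/3)^n}
      = (ENNReal.ofReal (p^2 + (1-p)^2))^n * (μ.prod μ) {z : ℝ × ℝ | |z.1 - z.2| < 1} := by
  induction n with
  | zero => simp
  | succ n ih =>
    have h3 : 3 * (1/3:ℝ)^(n+1) = (1/3)^n := by
      rw [pow_succ]; ring
    have := bc_prod_rec hp hμ (r := (1/3:ℝ)^(n+1))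
      (by rw [h3]; exact pow_le_one₀ (by norm_num) (by norm_num))
    rw [h3] at this
    rw [this, ih, pow_succ]
    ring

lemma bc_mu_Icc13 [IsProbabilityMeasure μ] (hp : p ∈ Set.Ioo (0:ℝ) 1)
    (hμ : μ = ENNReal.ofReal p • μ.map (fun x => x / 3)
        + ENNReal.ofReal (1 - p) • μ.map (fun x => x / 3 + 2 / 3)) :
    μ (Set.Icc 0 (1/3)) = ENNReal.ofReal p := by
  have h := bc_apply hp hμ (s := Set.Icc 0 (1/3)) measurableSet_Icc
  have e0 : (fun x : ℝ => x / 3) ⁻¹' Set.Icc 0 (1/3) = Set.Icc 0 1 := by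
    ext x; simp only [Set.mem_preimage, Set.mem_Icc]
    constructor <;> intro hh <;> constructor <;> linarith [hh.1, hh.2]
  have e1 : (fun x : ℝ => x / 3 + 2/3) ⁻¹' Set.Icc 0 (1/3) = Set.Icc (-2) (-1) := by
    ext x; simp only [Set.mem_preimage, Set.mem_Icc]
    constructor <;> intro hh <;> constructor <;> linarith [hh.1, hh.2]
  have h1 : μ (Set.Icc (0:ℝ) 1) = 1 :=
    (prob_compl_eq_zero_iff measurableSet_Icc).mp (bc_supp hp hμ)
  have h2 : μ (Set.Icc (-2:ℝ) (-1)) = 0 := by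
    refine measure_mono_null (fun x hx => ?_) (bc_supp hp hμ)
    simp only [Set.mem_Icc] at hx
    simp only [Set.mem_compl_iff, Set.mem_Icc, not_and_or, not_le]
    left; linarith [hx.2]
  rw [h, e0, e1, h1, h2]
  simp

lemma bc_C0_lower [IsProbabilityMeasure μ] (hp : p ∈ Set.Ioo (0:ℝ) 1)
    (hμ : μ = ENNReal.ofReal p • μ.map (fun x => x / 3)
        + ENNReal.ofReal (1 - p) • μ.map (fun x => x / 3 + 2 / 3)) :
    ENNReal.ofReal (p^2) ≤ (μ.prod μ) {z : ℝ × ℝ | |z.1 - z.2| < 1} := by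
  have hsub : (Set.Icc (0:ℝ) (1/3)) ×ˢ (Set.Icc (0:ℝ) (1/3)) ⊆ {z : ℝ × ℝ | |z.1 - z.2| < 1} := by
    rintro ⟨x, y⟩ ⟨hx, hy⟩
    simp only [Set.mem_Icc] at hx hy
    simp only [Set.mem_setOf_eq]
    rw [abs_lt]
    constructor <;> linarith [hx.1, hx.2, hy.1, hy.2]
  calc ENNReal.ofReal (p^2) = ENNReal.ofReal p * ENNReal.ofReal p := by
        rw [← ENNReal.ofReal_mul hp.1.le, sq]
    _ = (μ.prod μ) ((Set.Icc (0:ℝ) (1/3)) ×ˢ (Set.Icc (0:ℝ) (1/3))) := by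
        rw [Measure.prod_prod, bc_mu_Icc13 hp hμ]
    _ ≤ _ := measure_mono hsub

lemma bc_pow_third (k : ℕ) (s : ℝ) : ((1/3:ℝ)^k) ^ (-s) = ((3:ℝ)^s)^k := by
  have h1 : ((1/3:ℝ))^k = (3:ℝ) ^ (-(k:ℝ)) := by
    rw [Real.rpow_neg (by norm_num), Real.rpow_natCast, one_div, inv_pow]
  rw [h1, ← Real.rpow_natCast ((3:ℝ)^s) k, ← Real.rpow_mul (by norm_num : (0:ℝ) ≤ 3),
    ← Real.rpow_mul (by norm_num : (0:ℝ) ≤ 3)]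
  congr 1
  ring

lemma bc_energy_eq (μ : Measure ℝ) [SFinite μ] (s : ℝ) :
    energy μ s = ∫⁻ z : ℝ × ℝ, edist z.1 z.2 ^ (-s) ∂(μ.prod μ) := by
  rw [energy]
  exact (MeasureTheory.lintegral_prod _
    ((ENNReal.continuous_rpow_const.measurable.comp measurable_edist).aemeasurable)).symm

lemma bc_energy_lt_top [IsProbabilityMeasure μ] (hp : p ∈ Set.Ioo (0:ℝ) 1)
    (hμ : μ = ENNReal.ofReal p • μ.map (fun x => x / 3)
        + ENNReal.ofReal (1 - p) • μ.map (fun x => x / 3 + 2 / 3))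
    {s : ℝ} (hs : 0 < s) (hlt : (p^2 + (1-p)^2) * (3:ℝ)^s < 1) :
    energy μ s < ⊤ := by
  have hq0 : (0:ℝ) < p^2 + (1-p)^2 := by nlinarith [hp.1, hp.2]
  set A : ℝ≥0∞ := ENNReal.ofReal ((3:ℝ)^s) with hA
  set Q : ℝ≥0∞ := ENNReal.ofReal (p^2 + (1-p)^2) with hQ
  set D : ℕ → Set (ℝ×ℝ) := fun m => {z : ℝ×ℝ | |z.1 - z.2| < (1/3)^m} with hD
  have hA1 : (1:ℝ≥0∞) ≤ A := by
    rw [hA, show (1:ℝ≥0∞) = ENNReal.ofReal 1 by simp]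
    refine ENNReal.ofReal_le_ofReal ?_
    calc (1:ℝ) = (3:ℝ) ^ (0:ℝ) := by rw [Real.rpow_zero]
      _ ≤ (3:ℝ) ^ s := Real.rpow_le_rpow_of_exponent_le (by norm_num) hs.le
  have hAt : A ≠ ⊤ := ENNReal.ofReal_ne_top
  have hpoint : ∀ z : ℝ × ℝ, edist z.1 z.2 ^ (-s) ≤
      1 + ∑' m : ℕ, Set.indicator (D m) (fun _ => A^(m+1)) z := by
    intro z
    have ht0 : 0 ≤ |z.1 - z.2| := abs_nonneg _
    have hedist : edist z.1 z.2 = ENNReal.ofReal |z.1 - z.2| := by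
      rw [edist_dist, Real.dist_eq]
    by_cases h1 : |z.1 - z.2| < 1
    · by_cases hz : |z.1 - z.2| = 0
      · have hmem : ∀ m : ℕ, z ∈ D m := fun m => by
          simp only [hD, Set.mem_setOf_eq, hz]; positivity
        have hge : ∀ m : ℕ, (1:ℝ≥0∞) ≤ Set.indicator (D m) (fun _ => A^(m+1)) z := by
          intro m
          rw [Set.indicator_of_mem (hmem m)]
          exact one_le_pow_of_one_le' hA1 (m+1)
        have htop : (∑' m : ℕ, Set.indicator (D m) (fun _ => A^(m+1)) z) = ⊤ := by
          have h2 := ENNReal.tsum_le_tsum hge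
          rw [ENNReal.tsum_const_eq_top_of_ne_zero one_ne_zero] at h2
          exact top_le_iff.mp h2
        rw [htop]
        simp
      · have htpos : 0 < |z.1 - z.2| := lt_of_le_of_ne ht0 (Ne.symm hz)
        have hex : ∃ k : ℕ, (1/3:ℝ)^k ≤ |z.1 - z.2| := by
          obtain ⟨k, hk⟩ := exists_pow_lt_of_lt_one htpos (by norm_num : (1/3:ℝ) < 1)
          exact ⟨k, hk.le⟩
        have hkle : (1/3:ℝ)^(Nat.find hex) ≤ |z.1 - z.2| := Nat.find_spec hex
        have hk0 : Nat.find hex ≠ 0 := by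
          intro h
          rw [h] at hkle; simp at hkle; linarith
        obtain ⟨m, hm⟩ : ∃ m, Nat.find hex = m + 1 :=
          ⟨Nat.find hex - 1, (Nat.succ_pred_eq_of_pos (Nat.pos_of_ne_zero hk0)).symm⟩
        have hmlt : |z.1 - z.2| < (1/3:ℝ)^m := by
          by_contra hcon
          push_neg at hcon
          exact Nat.find_min hex (by omega) hcon
        have hzD : z ∈ D m := by
          simp only [hD, Set.mem_setOf_eq]
          exact hmlt
        have hfle : edist z.1 z.2 ^ (-s) ≤ A^(m+1) := by
          rw [hedist, ENNReal.ofReal_rpow_of_pos htpos]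
          calc ENNReal.ofReal (|z.1 - z.2| ^ (-s))
              ≤ ENNReal.ofReal (((1/3:ℝ)^(Nat.find hex)) ^ (-s)) :=
                ENNReal.ofReal_le_ofReal
                  (Real.rpow_le_rpow_of_nonpos (by positivity) hkle (by linarith))
            _ = A^(m+1) := by
                rw [bc_pow_third, hA, ← ENNReal.ofReal_pow (by positivity), hm]
        calc edist z.1 z.2 ^ (-s) ≤ Set.indicator (D m) (fun _ => A^(m+1)) z := by
              rw [Set.indicator_of_mem hzD]; exact hfle
          _ ≤ ∑' m : ℕ, Set.indicator (D m) (fun _ => A^(m+1)) z := ENNReal.le_tsum m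
          _ ≤ 1 + _ := le_add_self
    · have hle1 : edist z.1 z.2 ^ (-s) ≤ 1 := by
        rw [hedist]
        refine ENNReal.rpow_le_one_of_one_le_of_neg ?_ (by linarith)
        rw [show (1:ℝ≥0∞) = ENNReal.ofReal 1 by simp]
        exact ENNReal.ofReal_le_ofReal (le_of_not_gt h1)
      exact hle1.trans le_self_add
  rw [bc_energy_eq]
  have hmeasD : ∀ m : ℕ, MeasurableSet (D m) := fun m => bc_measurable_D _
  have step1 : ∫⁻ z, edist z.1 z.2 ^ (-s) ∂(μ.prod μ)
      ≤ 1 + ∑' m : ℕ, A^(m+1) * (μ.prod μ) (D m) := by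
    calc ∫⁻ z, edist z.1 z.2 ^ (-s) ∂(μ.prod μ)
        ≤ ∫⁻ z, (1 + ∑' m : ℕ, Set.indicator (D m) (fun _ => A^(m+1)) z) ∂(μ.prod μ) :=
          lintegral_mono hpoint
      _ = ∫⁻ _, (1:ℝ≥0∞) ∂(μ.prod μ)
          + ∫⁻ z, ∑' m : ℕ, Set.indicator (D m) (fun _ => A^(m+1)) z ∂(μ.prod μ) :=
          lintegral_add_left measurable_const _
      _ = 1 + ∑' m : ℕ, A^(m+1) * (μ.prod μ) (D m) := by
          rw [lintegral_const, measure_univ, mul_one]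
          congr 1
          rw [lintegral_tsum (fun m => (measurable_const.indicator (hmeasD m)).aemeasurable)]
          congr 1
          ext m
          rw [lintegral_indicator (hmeasD m), setLIntegral_const]
  have step2 : ∑' m : ℕ, A^(m+1) * (μ.prod μ) (D m) ≤ A * (1 - A * Q)⁻¹ := by
    calc ∑' m : ℕ, A^(m+1) * (μ.prod μ) (D m)
        ≤ ∑' m : ℕ, A * (A*Q)^m := by
          refine ENNReal.tsum_le_tsum (fun m => ?_)
          have hC := bc_Cn hp hμ m
          have : (μ.prod μ) (D m) ≤ Q^m := by
            rw [hD]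
            simp only []
            rw [hC, hQ]
            calc (ENNReal.ofReal (p^2 + (1-p)^2))^m * (μ.prod μ) {z : ℝ × ℝ | |z.1 - z.2| < 1}
                ≤ (ENNReal.ofReal (p^2 + (1-p)^2))^m * 1 := by
                  gcongr
                  exact prob_le_one
              _ = _ := by rw [mul_one]
          calc A^(m+1) * (μ.prod μ) (D m) ≤ A^(m+1) * Q^m := by gcongr
            _ = A * (A*Q)^m := by rw [pow_succ, mul_pow]; ring
      _ = A * ∑' m : ℕ, (A*Q)^m := ENNReal.tsum_mul_left
      _ = A * (1 - A * Q)⁻¹ := by rw [ENNReal.tsum_geometric]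
  have hAQ : A * Q < 1 := by
    rw [hA, hQ, ← ENNReal.ofReal_mul (by positivity)]
    rw [show (1:ℝ≥0∞) = ENNReal.ofReal 1 by simp]
    refine (ENNReal.ofReal_lt_ofReal_iff (by norm_num)).mpr ?_
    calc (3:ℝ)^s * (p^2 + (1-p)^2) = (p^2 + (1-p)^2) * (3:ℝ)^s := by ring
      _ < 1 := hlt
  have hfin : A * (1 - A * Q)⁻¹ < ⊤ := by
    refine ENNReal.mul_lt_top hAt.lt_top ?_
    rw [ENNReal.inv_lt_top]
    exact tsub_pos_iff_lt.mpr hAQ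
  calc ∫⁻ z, edist z.1 z.2 ^ (-s) ∂(μ.prod μ) ≤ 1 + ∑' m : ℕ, A^(m+1) * (μ.prod μ) (D m) := step1
    _ ≤ 1 + A * (1 - A * Q)⁻¹ := by gcongr
    _ < ⊤ := by
        rw [ENNReal.add_lt_top]
        exact ⟨ENNReal.one_lt_top, hfin⟩

lemma bc_energy_eq_top [IsProbabilityMeasure μ] (hp : p ∈ Set.Ioo (0:ℝ) 1)
    (hμ : μ = ENNReal.ofReal p • μ.map (fun x => x / 3)
        + ENNReal.ofReal (1 - p) • μ.map (fun x => x / 3 + 2 / 3))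
    {s : ℝ} (hgt : 1 < (p^2 + (1-p)^2) * (3:ℝ)^s) :
    energy μ s = ⊤ := by
  have hq1 : p^2 + (1-p)^2 < 1 := by nlinarith [hp.1, hp.2]
  have hq0 : (0:ℝ) < p^2 + (1-p)^2 := by nlinarith [hp.1, hp.2]
  have hs : 0 < s := by
    by_contra h
    push_neg at h
    have h31 : (3:ℝ)^s ≤ 1 := Real.rpow_le_one_of_one_le_of_nonpos (by norm_num) h
    have h3p : (0:ℝ) < (3:ℝ)^s := Real.rpow_pos_of_pos (by norm_num) s
    nlinarith
  set A : ℝ≥0∞ := ENNReal.ofReal ((3:ℝ)^s) with hA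
  set Q : ℝ≥0∞ := ENNReal.ofReal (p^2 + (1-p)^2) with hQ
  set D : ℕ → Set (ℝ×ℝ) := fun m => {z : ℝ×ℝ | |z.1 - z.2| < (1/3)^m} with hD
  have key : ∀ n : ℕ, A^n * (Q^n * ENNReal.ofReal (p^2)) ≤ energy μ s := by
    intro n
    rw [bc_energy_eq]
    have hlow : ∀ z ∈ D n, (A:ℝ≥0∞)^n ≤ edist z.1 z.2 ^ (-s) := by
      intro z hz
      have hzlt : |z.1 - z.2| < (1/3:ℝ)^n := hz
      rw [edist_dist, Real.dist_eq]
      by_cases h0 : |z.1 - z.2| = 0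
      · rw [h0, ENNReal.ofReal_zero, ENNReal.zero_rpow_of_neg (by linarith)]
        exact le_top
      · have hpos : 0 < |z.1 - z.2| := lt_of_le_of_ne (abs_nonneg _) (Ne.symm h0)
        rw [ENNReal.ofReal_rpow_of_pos hpos]
        rw [hA, ← ENNReal.ofReal_pow (by positivity), ← bc_pow_third]
        exact ENNReal.ofReal_le_ofReal
          (Real.rpow_le_rpow_of_nonpos hpos hzlt.le (by linarith))
    calc A^n * (Q^n * ENNReal.ofReal (p^2)) ≤ A^n * (μ.prod μ) (D n) := by
          gcongr
          have hC := bc_Cn hp hμ n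
          have hl := bc_C0_lower hp hμ
          calc Q^n * ENNReal.ofReal (p^2)
              ≤ Q^n * (μ.prod μ) {z : ℝ × ℝ | |z.1 - z.2| < 1} := by gcongr
            _ = (μ.prod μ) (D n) := by rw [hD]; exact hC.symm
      _ = ∫⁻ z, Set.indicator (D n) (fun _ => A^n) z ∂(μ.prod μ) := by
          rw [lintegral_indicator (bc_measurable_D _), setLIntegral_const]
      _ ≤ ∫⁻ z : ℝ × ℝ, edist z.1 z.2 ^ (-s) ∂(μ.prod μ) := by
          refine lintegral_mono (fun z => ?_)
          by_cases hz : z ∈ D n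
          · rw [Set.indicator_of_mem hz]; exact hlow z hz
          · rw [Set.indicator_of_notMem hz]; exact zero_le
  have hAQ : 1 < A * Q := by
    rw [hA, hQ, ← ENNReal.ofReal_mul (by positivity),
      show (1:ℝ≥0∞) = ENNReal.ofReal 1 by simp]
    refine (ENNReal.ofReal_lt_ofReal_iff ?_).mpr ?_
    · nlinarith [Real.rpow_pos_of_pos (show (0:ℝ) < 3 by norm_num) s]
    · nlinarith
  have hp2 : ENNReal.ofReal (p^2) ≠ 0 := by
    refine (ENNReal.ofReal_pos.mpr ?_).ne'
    nlinarith [hp.1]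
  have htop : Tendsto (fun n : ℕ => (A*Q)^n * ENNReal.ofReal (p^2)) atTop (𝓝 ⊤) := by
    have h1 : Tendsto (fun n : ℕ => (A*Q)^n) atTop (𝓝 ⊤) :=
      ENNReal.tendsto_pow_atTop_nhds_top_iff.mpr hAQ
    have h2 := ENNReal.Tendsto.mul_const (b := ENNReal.ofReal (p^2)) h1
      (Or.inl (by simp))
    rwa [ENNReal.top_mul hp2] at h2
  have hle : ⊤ ≤ energy μ s := by
    refine le_of_tendsto htop (Eventually.of_forall (fun n => ?_))
    have := key n
    calc (A*Q)^n * ENNReal.ofReal (p^2) = A^n * (Q^n * ENNReal.ofReal (p^2)) := by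
          rw [mul_pow, mul_assoc]
      _ ≤ energy μ s := this
  exact top_le_iff.mp hle

lemma bc_energy_lt_top_nonpos [IsProbabilityMeasure μ] (hp : p ∈ Set.Ioo (0:ℝ) 1)
    (hμ : μ = ENNReal.ofReal p • μ.map (fun x => x / 3)
        + ENNReal.ofReal (1 - p) • μ.map (fun x => x / 3 + 2 / 3))
    {s : ℝ} (hs : s ≤ 0) :
    energy μ s < ⊤ := by
  have hae : ∀ᵐ x ∂μ, x ∈ Set.Icc (0:ℝ) 1 := by
    refine mem_ae_iff.mpr ?_
    exact bc_supp hp hμ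
  have hbound : ∀ᵐ x ∂μ, ∫⁻ y, edist x y ^ (-s) ∂μ ≤ 1 := by
    filter_upwards [hae] with x hx
    have hin : ∀ᵐ y ∂μ, edist x y ^ (-s) ≤ 1 := by
      filter_upwards [hae] with y hy
      refine ENNReal.rpow_le_one ?_ (by linarith)
      rw [edist_dist, Real.dist_eq, show (1:ℝ≥0∞) = ENNReal.ofReal 1 by simp]
      refine ENNReal.ofReal_le_ofReal (abs_le.mpr ⟨?_, ?_⟩) <;>
        simp only [Set.mem_Icc] at hx hy <;> linarith [hx.1, hx.2, hy.1, hy.2]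
    calc ∫⁻ y, edist x y ^ (-s) ∂μ ≤ ∫⁻ _, (1:ℝ≥0∞) ∂μ := lintegral_mono_ae hin
      _ = 1 := by simp
  calc energy μ s ≤ ∫⁻ _, (1:ℝ≥0∞) ∂μ := lintegral_mono_ae hbound
    _ = 1 := by simp
    _ < ⊤ := ENNReal.one_lt_top

end Aux

/-- The correlation dimension of the Bernoulli measure with weights `(p, 1-p)`
on the middle-thirds Cantor set equals `-log₃(p² + (1-p)²)`. -/
theorem corrDim_bernoulli_cantor (p : ℝ) (hp : p ∈ Set.Ioo (0 : ℝ) 1)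
    (μ : Measure ℝ) [IsProbabilityMeasure μ]
    (hμ : μ = ENNReal.ofReal p • μ.map (fun x => x / 3)
        + ENNReal.ofReal (1 - p) • μ.map (fun x => x / 3 + 2 / 3)) :
    corrDim μ = - Real.logb 3 (p ^ 2 + (1 - p) ^ 2) := by
  have hq0 : (0:ℝ) < p^2 + (1-p)^2 := by nlinarith [hp.1, hp.2]
  have hq1 : p^2 + (1-p)^2 < 1 := by nlinarith [hp.1, hp.2]
  set d := -Real.logb 3 (p^2 + (1-p)^2) with hd
  have hd0 : 0 < d := by
    rw [hd, neg_pos]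
    exact Real.logb_neg (by norm_num) hq0 hq1
  have h3d : (3:ℝ)^d = (p^2 + (1-p)^2)⁻¹ := by
    rw [hd, Real.rpow_neg (by norm_num), Real.rpow_logb (by norm_num) (by norm_num) hq0]
  have himp1 : ∀ s : ℝ, s < d → (p^2 + (1-p)^2) * (3:ℝ)^s < 1 := by
    intro s hsd
    have h1 : (3:ℝ)^s < (3:ℝ)^d := (Real.rpow_lt_rpow_left_iff (by norm_num)).mpr hsd
    rw [h3d] at h1
    calc (p^2 + (1-p)^2) * (3:ℝ)^s < (p^2 + (1-p)^2) * (p^2 + (1-p)^2)⁻¹ := by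
          exact (mul_lt_mul_iff_right₀ hq0).mpr h1
      _ = 1 := mul_inv_cancel₀ hq0.ne'
  have himp2 : ∀ s : ℝ, d < s → 1 < (p^2 + (1-p)^2) * (3:ℝ)^s := by
    intro s hsd
    have h1 : (3:ℝ)^d < (3:ℝ)^s := (Real.rpow_lt_rpow_left_iff (by norm_num)).mpr hsd
    rw [h3d] at h1
    calc (1:ℝ) = (p^2 + (1-p)^2) * (p^2 + (1-p)^2)⁻¹ := (mul_inv_cancel₀ hq0.ne').symm
      _ < (p^2 + (1-p)^2) * (3:ℝ)^s := (mul_lt_mul_iff_right₀ hq0).mpr h1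
  have hsub1 : Set.Iio d ⊆ {s : ℝ | energy μ s < ⊤} := by
    intro s hs
    simp only [Set.mem_Iio] at hs
    rcases le_or_gt s 0 with h|h
    · exact bc_energy_lt_top_nonpos hp hμ h
    · exact bc_energy_lt_top hp hμ h (himp1 s hs)
  have hsub2 : {s : ℝ | energy μ s < ⊤} ⊆ Set.Iic d := by
    intro s hs
    by_contra h
    simp only [Set.mem_Iic, not_le] at h
    simp only [Set.mem_setOf_eq] at hs
    rw [bc_energy_eq_top hp hμ (himp2 s h)] at hs
    exact lt_irrefl _ hs
  rw [corrDim]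
  refine le_antisymm ?_ ?_
  · exact csSup_le ⟨d - 1, hsub1 (by simp)⟩
      (fun x hx => hsub2 hx)
  · calc d = sSup (Set.Iio d) := csSup_Iio.symm
      _ ≤ _ := csSup_le_csSup ⟨d, fun x hx => hsub2 hx⟩ ⟨d - 1, by simp⟩ hsub1
end

section
/- Let X and Y be complete separable metric spaces, f : Y → X continuous, μ a locally finite Borel measure with compact support on Y, and A ⊂ Y with μ(A) > 0. Then for μ-almost every y ∈ A, the lower local dimension of the pushforward fμ at f(y) equals the lower local dimension of f(μ|_A) at f(y). -/
open MeasureTheory Filter Metric Set Topology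
open scoped ENNReal

section Helpers
set_option linter.unusedVariables false
set_option linter.unusedSectionVars false

variable {X : Type*} [MetricSpace X] [SecondCountableTopology X]
  [MeasurableSpace X] [BorelSpace X]

lemma vitali_step (m ν : Measure X) {r : ℝ} (hr : 0 < r) (c : ℝ≥0∞) :
    ν {x | ν (closedBall x (5 * r)) < c * m (closedBall x r)} ≤ c * m univ := by
  set F := {x | ν (closedBall x (5 * r)) < c * m (closedBall x r)} with hF
  obtain ⟨u, uF, udisj, hcov⟩ :=
    Vitali.exists_disjoint_subfamily_covering_enlargement_closedBall F id (fun _ => r) r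
      (fun a _ => le_rfl) 5 (by norm_num)
  have ucount : u.Countable := by
    apply udisj.countable_of_nonempty_interior
    intro i _
    exact ⟨i, ball_subset_interior_closedBall (mem_ball_self hr)⟩
  have Fsub : F ⊆ ⋃ b ∈ u, closedBall b (5 * r) := by
    intro a ha
    obtain ⟨b, bu, hb⟩ := hcov a ha
    exact mem_biUnion bu (hb (mem_closedBall_self hr.le))
  calc ν F ≤ ν (⋃ b ∈ u, closedBall b (5 * r)) := measure_mono Fsub
    _ ≤ ∑' b : u, ν (closedBall b (5 * r)) := measure_biUnion_le ν ucount _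
    _ ≤ ∑' b : u, c * m (closedBall (b : X) r) :=
        ENNReal.tsum_le_tsum (fun b => (uF b.2).le)
    _ = c * ∑' b : u, m (closedBall (b : X) r) := ENNReal.tsum_mul_left
    _ ≤ c * m univ := by
        gcongr
        have := measure_biUnion (μ := m) ucount udisj (fun b _ => measurableSet_closedBall)
        simp only [id] at this
        rw [← this]
        exact measure_mono (subset_univ _)

lemma borel_cantelli (m ν : Measure X) [IsFiniteMeasure m] (hle : ν ≤ m)
    {ε : ℝ} (hε : 0 < ε) :
    ∀ᵐ x ∂ν, ∀ᶠ n : ℕ in atTop,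
      ENNReal.ofReal (((1 / 2 : ℝ) ^ n) ^ ε) * m (closedBall x ((1 / 2 : ℝ) ^ n))
        ≤ ν (closedBall x (5 * (1 / 2 : ℝ) ^ n)) := by
  set s : ℕ → Set X := fun n =>
    {x | ν (closedBall x (5 * (1 / 2 : ℝ) ^ n))
        < ENNReal.ofReal (((1 / 2 : ℝ) ^ n) ^ ε) * m (closedBall x ((1 / 2 : ℝ) ^ n))} with hs
  have hsum : (∑' n, ν (s n)) ≠ ∞ := by
    rw [← lt_top_iff_ne_top]
    have h1 : ∀ n : ℕ, ν (s n) ≤ ENNReal.ofReal (((1 / 2 : ℝ) ^ ε) ^ n) * m univ := by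
      intro n
      have := vitali_step (X := X) m ν (r := (1 / 2 : ℝ) ^ n) (by positivity)
        (ENNReal.ofReal (((1 / 2 : ℝ) ^ n) ^ ε))
      have heq : (((1 / 2 : ℝ) ^ n) ^ ε) = ((1 / 2 : ℝ) ^ ε) ^ n := by
        rw [← Real.rpow_natCast ((1 / 2 : ℝ)) n, ← Real.rpow_natCast ((1 / 2 : ℝ) ^ ε) n,
          ← Real.rpow_mul (by norm_num), ← Real.rpow_mul (by norm_num), mul_comm]
      rw [← heq]
      exact this
    calc (∑' n, ν (s n)) ≤ ∑' n, ENNReal.ofReal (((1 / 2 : ℝ) ^ ε) ^ n) * m univ :=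
          ENNReal.tsum_le_tsum h1
      _ = (∑' n, ENNReal.ofReal ((1 / 2 : ℝ) ^ ε) ^ n) * m univ := by
          rw [ENNReal.tsum_mul_right]
          congr 1
          refine tsum_congr fun n => ?_
          rw [← ENNReal.ofReal_pow (by positivity)]
      _ < ∞ := by
          apply ENNReal.mul_lt_top _ (measure_lt_top m univ)
          rw [ENNReal.tsum_geometric]
          refine ENNReal.inv_lt_top.2 ?_
          rw [tsub_pos_iff_lt]
          exact ENNReal.ofReal_lt_one.2 (Real.rpow_lt_one (by norm_num) (by norm_num) hε)
  filter_upwards [ae_eventually_notMem hsum] with x hx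
  filter_upwards [hx] with n hn
  simpa [hs, not_lt] using hn

lemma ae_closedBall_pos (ν : Measure X) :
    ∀ᵐ x ∂ν, ∀ ρ : ℝ, 0 < ρ → 0 < ν (closedBall x ρ) := by
  obtain ⟨T, Tcount, TS, hT⟩ :=
    TopologicalSpace.isOpen_sUnion_countable {u : Set X | IsOpen u ∧ ν u = 0}
      (fun u hu => hu.1)
  have hTnull : ν (⋃₀ {u : Set X | IsOpen u ∧ ν u = 0}) = 0 := by
    rw [← hT, sUnion_eq_biUnion]
    exact (measure_biUnion_null_iff Tcount).2 fun u hu => (TS hu).2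
  rw [ae_iff]
  refine measure_mono_null ?_ hTnull
  intro x hx
  simp only [mem_setOf_eq, not_forall] at hx
  obtain ⟨ρ, hρ, hzero⟩ := hx
  refine ⟨ball x ρ, ⟨isOpen_ball, ?_⟩, mem_ball_self hρ⟩
  have : ν (closedBall x ρ) = 0 := by
    simpa [pos_iff_ne_zero] using hzero
  exact measure_mono_null ball_subset_closedBall this

lemma tendsto_const_div_log (C : ℝ) :
    Tendsto (fun s : ℝ => C / Real.log s) (𝓝[>] (0:ℝ)) (𝓝 0) := by
  have hneg : Tendsto (fun s : ℝ => -Real.log s) (𝓝[>] (0:ℝ)) atTop :=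
    tendsto_neg_atBot_iff.1 (by simpa using Real.tendsto_log_nhdsGT_zero)
  have := Filter.Tendsto.const_div_atTop hneg (-C)
  simpa [neg_div_neg_eq] using this

lemma ptwise (m ν : Measure X) [IsFiniteMeasure m] (hle : ν ≤ m) (x : X)
    (hpos : ∀ ρ : ℝ, 0 < ρ → 0 < ν (closedBall x ρ))
    (hbc : ∀ k : ℕ, ∀ᶠ n : ℕ in atTop,
      ENNReal.ofReal (((1 / 2 : ℝ) ^ n) ^ (1 / (k + 1 : ℝ))) * m (closedBall x ((1 / 2 : ℝ) ^ n))
        ≤ ν (closedBall x (5 * (1 / 2 : ℝ) ^ n))) :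
    lowerLocalDim m x = lowerLocalDim ν x := by
  have hνle : ∀ s : Set X, ν s ≤ m s := fun s => Measure.le_iff'.1 hle s
  have hνfin : ∀ ρ : ℝ, ν (closedBall x ρ) ≠ ∞ :=
    fun ρ => ne_top_of_le_ne_top (measure_ne_top m _) (hνle _)
  have hmposR : ∀ ρ : ℝ, 0 < ρ → 0 < (m (closedBall x ρ)).toReal := fun ρ hρ =>
    ENNReal.toReal_pos ((hpos ρ hρ).trans_le (hνle _)).ne' (measure_ne_top m _)
  have hνposR : ∀ ρ : ℝ, 0 < ρ → 0 < (ν (closedBall x ρ)).toReal := fun ρ hρ =>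
    ENNReal.toReal_pos (hpos ρ hρ).ne' (hνfin _)
  set fm : ℝ → ℝ := fun r => Real.log (m (closedBall x r)).toReal / Real.log r with hfm
  set fν : ℝ → ℝ := fun r => Real.log (ν (closedBall x r)).toReal / Real.log r with hfν
  set S : Set ℝ := {a | ∀ᶠ r in 𝓝[>] (0:ℝ), a ≤ fm r} with hS
  set T : Set ℝ := {a | ∀ᶠ r in 𝓝[>] (0:ℝ), a ≤ fν r} with hT
  have hIoo1 : ∀ᶠ r in 𝓝[>] (0:ℝ), r ∈ Ioo (0:ℝ) 1 :=
    Ioo_mem_nhdsGT_of_mem ⟨le_refl 0, one_pos⟩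
  -- S ⊆ T
  have hST : S ⊆ T := by
    intro a ha
    filter_upwards [ha, hIoo1] with r har hr
    refine har.trans ?_
    have h1 : Real.log (ν (closedBall x r)).toReal ≤ Real.log (m (closedBall x r)).toReal :=
      Real.log_le_log (hνposR r hr.1) (ENNReal.toReal_mono (measure_ne_top m _) (hνle _))
    exact div_le_div_of_nonpos_of_le (Real.log_neg hr.1 hr.2).le h1
  -- key step
  have hkey : ∀ ε : ℝ, 0 < ε → ∀ a ∈ T, a - ε ∈ S := by
    intro ε hε a ha
    obtain ⟨k, hk⟩ := exists_nat_one_div_lt hε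
    set δ : ℝ := 1 / (k + 1 : ℝ) with hδdef
    have hδ : 0 < δ := by positivity
    obtain ⟨N, hN⟩ := Filter.eventually_atTop.1 (hbc k)
    obtain ⟨u, hu0, huT⟩ := mem_nhdsGT_iff_exists_Ioo_subset.1 ha
    rw [mem_Ioi] at hu0
    have hev2 : ∀ᶠ s in 𝓝[>] (0:ℝ), δ - ε ≤ a * Real.log 10 / Real.log s :=
      (tendsto_const_div_log (a * Real.log 10)).eventually
        (eventually_ge_nhds (by linarith : δ - ε < 0))
    set c₀ : ℝ := min (min ((1:ℝ)/10) (u/10)) ((1/2:ℝ)^N) with hc₀def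
    have hc₀ : 0 < c₀ := by
      refine lt_min (lt_min (by norm_num) (by positivity)) (by positivity)
    have hIooc : ∀ᶠ s in 𝓝[>] (0:ℝ), s ∈ Ioo (0:ℝ) c₀ :=
      Ioo_mem_nhdsGT_of_mem ⟨le_refl 0, hc₀⟩
    show ∀ᶠ s in 𝓝[>] (0:ℝ), a - ε ≤ fm s
    filter_upwards [hIooc, hev2] with s hs hs2
    obtain ⟨hs0, hsc⟩ := hs
    have hs110 : s < 1/10 := hsc.trans_le ((min_le_left _ _).trans (min_le_left _ _))
    have hsu : s < u/10 := hsc.trans_le ((min_le_left _ _).trans (min_le_right _ _))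
    have hsN : s < (1/2:ℝ)^N := hsc.trans_le (min_le_right _ _)
    -- find n with (1/2)^(n+1) < s ≤ (1/2)^n
    have hex : ∃ n : ℕ, (1/2:ℝ)^n < s := exists_pow_lt_of_lt_one hs0 (by norm_num)
    have hn₀ne : Nat.find hex ≠ 0 := by
      intro h
      have := Nat.find_spec hex
      rw [h] at this
      norm_num at this
      linarith
    set n : ℕ := Nat.find hex - 1 with hndef
    have hnsucc : n + 1 = Nat.find hex := Nat.succ_pred_eq_of_pos (Nat.pos_of_ne_zero hn₀ne)
    have hrec1 : (1/2:ℝ)^(n+1) < s := by rw [hnsucc]; exact Nat.find_spec hex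
    have hrec2 : s ≤ (1/2:ℝ)^n := not_lt.1 (Nat.find_min hex (by omega))
    have hnN : N ≤ n := by
      by_contra h
      push_neg at h
      have : ((1:ℝ)/2)^N ≤ (1/2:ℝ)^(n+1) :=
        pow_le_pow_of_le_one (by norm_num) (by norm_num) (by omega)
      linarith
    set r : ℝ := (1/2:ℝ)^n with hrdef
    have hr0 : 0 < r := by positivity
    have hrs : s ≤ r := hrec2
    have hr2s : r < 2*s := by
      have : (1/2:ℝ)^(n+1) = (1/2:ℝ)^n * (1/2) := pow_succ _ _
      rw [hrdef]
      nlinarith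
    have hBC := hN n hnN
    -- real-valued comparisons
    have hmR : r ^ δ * (m (closedBall x r)).toReal ≤ (ν (closedBall x (5*r))).toReal := by
      have h2 := ENNReal.toReal_mono (hνfin _) hBC
      rwa [ENNReal.toReal_mul, ENNReal.toReal_ofReal (by positivity)] at h2
    have hν1 : (ν (closedBall x (5*r))).toReal ≤ (ν (closedBall x (10*s))).toReal :=
      ENNReal.toReal_mono (hνfin _)
        (measure_mono (closedBall_subset_closedBall (by linarith)))
    have h10s1 : 10*s < 1 := by linarith
    have h10s0 : 0 < 10*s := by linarith
    have hfν10 : a ≤ fν (10*s) := huT ⟨by linarith, by linarith⟩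
    have hlog10s : Real.log (10*s) < 0 := Real.log_neg h10s0 h10s1
    have hνlog : Real.log ((ν (closedBall x (10*s))).toReal) ≤ a * Real.log (10*s) :=
      (le_div_iff_of_neg hlog10s).1 hfν10
    have e1 : Real.log (m (closedBall x s)).toReal ≤ Real.log (m (closedBall x r)).toReal :=
      Real.log_le_log (hmposR s hs0)
        (ENNReal.toReal_mono (measure_ne_top m _)
          (measure_mono (closedBall_subset_closedBall hrs)))
    have e2 : Real.log (r ^ δ * (m (closedBall x r)).toReal)
        ≤ Real.log (ν (closedBall x (5*r))).toReal :=
      Real.log_le_log (mul_pos (Real.rpow_pos_of_pos hr0 δ) (hmposR r hr0)) hmR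
    rw [Real.log_mul (Real.rpow_pos_of_pos hr0 δ).ne' (hmposR r hr0).ne', Real.log_rpow hr0] at e2
    have e3 : Real.log (ν (closedBall x (5*r))).toReal
        ≤ Real.log (ν (closedBall x (10*s))).toReal :=
      Real.log_le_log (hνposR _ (by linarith)) hν1
    have e4 : Real.log (10*s) = Real.log 10 + Real.log s :=
      Real.log_mul (by norm_num) hs0.ne'
    have e5 : Real.log s ≤ Real.log r := Real.log_le_log hs0 hrs
    have e4' : a * Real.log (10*s) = a * Real.log 10 + a * Real.log s := by rw [e4]; ring
    have hmlog : Real.log (m (closedBall x s)).toReal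
        ≤ (a - δ) * Real.log s + a * Real.log 10 := by
      have e6 : δ * Real.log s ≤ δ * Real.log r := mul_le_mul_of_nonneg_left e5 hδ.le
      have expand : (a - δ) * Real.log s = a * Real.log s - δ * Real.log s := by ring
      linarith
    have hlogs : Real.log s < 0 := Real.log_neg hs0 (by linarith)
    have hdiv : ((a - δ) * Real.log s + a * Real.log 10) / Real.log s
        ≤ Real.log (m (closedBall x s)).toReal / Real.log s :=
      div_le_div_of_nonpos_of_le hlogs.le hmlog
    rw [add_div, mul_div_cancel_right₀ _ hlogs.ne] at hdiv
    have : a - ε ≤ (a - δ) + a * Real.log 10 / Real.log s := by linarith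
    exact this.trans hdiv
  -- S nonempty
  have hSne : (-1:ℝ) ∈ S := by
    set C : ℝ := max 0 (Real.log (m univ).toReal) with hCdef
    have hevC : ∀ᶠ r in 𝓝[>] (0:ℝ), (-1:ℝ) ≤ C / Real.log r :=
      (tendsto_const_div_log C).eventually (eventually_ge_nhds (by norm_num : (-1:ℝ) < 0))
    filter_upwards [hevC, hIoo1] with r h1 h2
    have hlr : Real.log r < 0 := Real.log_neg h2.1 h2.2
    have hub : Real.log (m (closedBall x r)).toReal ≤ C := by
      refine le_trans ?_ (le_max_right _ _)
      exact Real.log_le_log (hmposR r h2.1)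
        (ENNReal.toReal_mono (measure_ne_top m _) (measure_mono (subset_univ _)))
    have := div_le_div_of_nonpos_of_le hlr.le hub
    exact h1.trans this
  -- conclude
  have hm_eq : lowerLocalDim m x = sSup S := liminf_eq
  have hν_eq : lowerLocalDim ν x = sSup T := liminf_eq
  rw [hm_eq, hν_eq]
  by_cases hbdd : BddAbove T
  · have hSbdd : BddAbove S := hbdd.mono hST
    have hTne : T.Nonempty := ⟨-1, hST hSne⟩
    refine le_antisymm (csSup_le_csSup hbdd ⟨-1, hSne⟩ hST) ?_
    refine csSup_le hTne fun a ha => ?_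
    by_contra hcon
    push_neg at hcon
    have h2 := le_csSup hSbdd (hkey ((a - sSup S)/2) (by linarith) a ha)
    linarith
  · have hSbdd : ¬ BddAbove S := by
      rintro ⟨b, hb⟩
      exact hbdd ⟨b + 1, fun a ha => by
        have := hb (hkey 1 one_pos a ha)
        linarith⟩
    rw [csSup_of_not_bddAbove hbdd, csSup_of_not_bddAbove hSbdd]

end Helpers

theorem lowerLocalDim_map_restrict {X Y : Type*}
    [MetricSpace X] [CompleteSpace X] [SecondCountableTopology X]
    [MeasurableSpace X] [BorelSpace X]
    [MetricSpace Y] [CompleteSpace Y] [SecondCountableTopology Y]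
    [MeasurableSpace Y] [BorelSpace Y]
    (f : Y → X) (hf : Continuous f)
    (μ : Measure Y) [IsLocallyFiniteMeasure μ]
    (K : Set Y) (hK : IsCompact K) (hKfull : μ Kᶜ = 0)
    (A : Set Y) (hA : 0 < μ A) :
    ∀ᵐ y ∂μ.restrict A,
      lowerLocalDim (μ.map f) (f y) = lowerLocalDim ((μ.restrict A).map f) (f y) := by
  have hfm : Measurable f := hf.measurable
  have hμfin : IsFiniteMeasure μ := by
    constructor
    calc μ univ ≤ μ (K ∪ Kᶜ) := measure_mono (by simp)
      _ ≤ μ K + μ Kᶜ := measure_union_le _ _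
      _ = μ K := by rw [hKfull, add_zero]
      _ < ∞ := hK.measure_lt_top
  haveI : IsFiniteMeasure (μ.map f) := inferInstance
  have hle : (μ.restrict A).map f ≤ μ.map f :=
    Measure.map_mono Measure.restrict_le_self hfm
  have h1 := ae_closedBall_pos ((μ.restrict A).map f)
  have h2 : ∀ᵐ x ∂((μ.restrict A).map f), ∀ k : ℕ, ∀ᶠ n : ℕ in atTop,
      ENNReal.ofReal (((1 / 2 : ℝ) ^ n) ^ (1 / (k + 1 : ℝ)))
          * (μ.map f) (closedBall x ((1 / 2 : ℝ) ^ n))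
        ≤ ((μ.restrict A).map f) (closedBall x (5 * (1 / 2 : ℝ) ^ n)) :=
    ae_all_iff.2 fun k =>
      borel_cantelli (μ.map f) ((μ.restrict A).map f) hle (by positivity)
  have h3 : ∀ᵐ x ∂((μ.restrict A).map f),
      lowerLocalDim (μ.map f) x = lowerLocalDim ((μ.restrict A).map f) x := by
    filter_upwards [h1, h2] with x hx1 hx2
    exact ptwise _ _ hle x hx1 hx2
  exact ae_of_ae_map hfm.aemeasurable h3
end
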